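/- arXiv:2107.07252 — 4 statements merged into one kernel-verified Lean document; each statement's English description precedes it below -/
import Mathlib

section
/- Let Ψ ∈ C_c^∞(ℝ³ × ℝ³; ℝ), let x, y ∈ ℝ³ with x ≠ 0, set k = x/|x|, and let h, i be such that (k, h, i) is an orthonormal basis of ℝ³. For θ ∈ [0, π/2] and φ ∈ [0, 2π] set p(φ) = cos φ · h + sin φ · i and σ(φ) = cos θ · k + sin θ · p(φ). Then |(1/2π) ∫₀^{2π} [Ψ(|x|σ(φ), y) + Ψ(−|x|σ(φ), y) − Ψ(x, y) − Ψ(−x, y)] dφ| ≤ 2 L₂ |2x|² (1 − cos θ), where L₂ = sup_{(x,y)} ‖Dₓ²Ψ(x,y)‖ (supremum of the operator norm of the Hessian of Ψ in its first variable). Since |σ(φ) − k|² = 2(1 − cos θ), the right-hand side equals L₂ |2x|² |σ − k|². -/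
noncomputable section
open Real MeasureTheory
open scoped RealInnerProductSpace

abbrev E3 : Type := EuclideanSpace ℝ (Fin 3)

set_option maxHeartbeats 1000000 in
lemma grad_second_deriv_bound (Ψ : E3 × E3 → ℝ) (hΨ : ContDiff ℝ (⊤ : ℕ∞) Ψ)
    (hΨc : HasCompactSupport Ψ) :
    ∃ C : ℝ, 0 ≤ C ∧ ∀ b z : E3, ∃ M : E3 →L[ℝ] E3,
      HasFDerivAt (gradient (fun w => Ψ (w, b))) M z ∧ ‖M‖ ≤ C := by
  set e := InnerProductSpace.toDual ℝ E3 with he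
  set eS : (E3 →L[ℝ] ℝ) →L[ℝ] E3 := e.symm.toLinearIsometry.toContinuousLinearMap with heS
  set ι : E3 →L[ℝ] E3 × E3 := ContinuousLinearMap.inl ℝ E3 E3 with hι
  set Tc : ((E3 × E3) →L[ℝ] ℝ) →L[ℝ] (E3 →L[ℝ] ℝ) :=
    (ContinuousLinearMap.compL ℝ E3 (E3 × E3) ℝ).flip ι with hTc
  set D1 := fderiv ℝ Ψ with hD1def
  have hD1 : ContDiff ℝ (⊤ : ℕ∞) D1 := hΨ.fderiv_right (m := (⊤:ℕ∞)) (by norm_cast)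
  set D2 := fderiv ℝ D1 with hD2def
  have hD2c : Continuous D2 := (hD1.fderiv_right (m := (⊤:ℕ∞)) (by norm_cast)).continuous
  have hD2s : HasCompactSupport D2 := (hΨc.fderiv ℝ).fderiv ℝ
  obtain ⟨C, hC⟩ : ∃ C, ∀ q, ‖D2 q‖ ≤ C := by
    obtain ⟨C, hC⟩ := IsCompact.exists_bound_of_continuousOn
      (E := (E3 × E3) →L[ℝ] (E3 × E3) →L[ℝ] ℝ) hD2s hD2c.continuousOn
    refine ⟨max C 0, fun q => ?_⟩
    by_cases hq : q ∈ tsupport D2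
    · exact (hC q hq).trans (le_max_left _ _)
    · rw [image_eq_zero_of_notMem_tsupport hq]
      exact ContinuousLinearMap.opNorm_zero.le.trans (le_max_right _ _)
  have hC0 : 0 ≤ C := le_trans (ContinuousLinearMap.opNorm_nonneg _) (hC 0)
  have hιnorm : ∀ v : E3, ‖ι v‖ = ‖v‖ := by
    intro v
    simp [hι, Prod.norm_def]
  have grad_eq : ∀ b z', gradient (fun w => Ψ (w, b)) z' = eS (Tc (D1 (z', b))) := by
    intro b z'
    have h1 : HasFDerivAt (fun w : E3 => (w, b)) ι z' := hasFDerivAt_prodMk_left z' b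
    have h2 : HasFDerivAt (fun w : E3 => Ψ (w, b)) ((D1 (z', b)).comp ι) z' :=
      ((hΨ.differentiable (by simp) (z', b)).hasFDerivAt.comp z' h1)
    rw [gradient, h2.fderiv]
    rfl
  refine ⟨C, hC0, fun b z => ?_⟩
  have h1 : HasFDerivAt (fun w : E3 => (w, b)) ι z := hasFDerivAt_prodMk_left z b
  have h2 : HasFDerivAt D1 (D2 (z, b)) (z, b) := (hD1.differentiable (by simp) (z, b)).hasFDerivAt
  have h3 : HasFDerivAt (fun z' : E3 => D1 (z', b)) ((D2 (z, b)).comp ι) z := h2.comp z h1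
  have h4 := (Tc.hasFDerivAt).comp z h3
  have h5 := (eS.hasFDerivAt).comp z h4
  refine ⟨eS.comp (Tc.comp ((D2 (z, b)).comp ι)), ?_, ?_⟩
  · have : (gradient fun w => Ψ (w, b)) = fun z' => eS (Tc (D1 (z', b))) :=
      funext fun z' => grad_eq b z'
    rw [this]
    exact h5
  · have hι1 : ‖ι‖ ≤ 1 :=
      ContinuousLinearMap.opNorm_le_bound _ zero_le_one fun v => by rw [hιnorm v, one_mul]
    refine ContinuousLinearMap.opNorm_le_bound _ hC0 fun v => ?_
    have h7 : (eS.comp ((Tc.comp ((D2 (z, b)).comp ι)))) v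
        = e.symm ((D2 (z, b) (ι v)).comp ι) := rfl
    rw [h7, LinearIsometryEquiv.norm_map]
    calc ‖(D2 (z, b) (ι v)).comp ι‖ ≤ ‖D2 (z, b) (ι v)‖ * ‖ι‖ :=
          ContinuousLinearMap.opNorm_comp_le _ _
      _ ≤ ‖D2 (z, b) (ι v)‖ * 1 := by
          exact mul_le_mul_of_nonneg_left hι1 (norm_nonneg _)
      _ = ‖D2 (z, b) (ι v)‖ := mul_one _
      _ ≤ ‖D2 (z, b)‖ * ‖ι v‖ := ContinuousLinearMap.le_opNorm _ _
      _ ≤ C * ‖v‖ := by rw [hιnorm v]; exact mul_le_mul_of_nonneg_right (hC _) (norm_nonneg _)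


set_option maxHeartbeats 2000000 in
/-- Averaged second-order estimate for the discrete gradient: averaging over the circle of
unit vectors `p(φ) = cos φ·h + sin φ·i` orthogonal to `k = x/|x|` upgrades the estimate to
second order in `|σ − k|`, since `|σ(φ) − k|² = 2(1 − cos θ)`. -/
theorem averaged_discrete_gradient_estimate
    (Ψ : E3 × E3 → ℝ) (hΨ : ContDiff ℝ (⊤ : ℕ∞) Ψ) (hΨc : HasCompactSupport Ψ)
    (x y : E3) (hx : x ≠ 0)
    (k h i : E3) (hk : k = ‖x‖⁻¹ • x)
    (hh : ‖h‖ = 1) (hi : ‖i‖ = 1)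
    (hkh : ⟪k, h⟫ = 0) (hki : ⟪k, i⟫ = 0) (hhi : ⟪h, i⟫ = 0)
    (θ : ℝ) (hθ : θ ∈ Set.Icc 0 (π / 2))
    (L₂ : ℝ)
    (hL₂ : L₂ = ⨆ q : E3 × E3,
      ‖fderiv ℝ (fun z => gradient (fun w => Ψ (w, q.2)) z) q.1‖) :
    |(1 / (2 * π)) * ∫ φ in (0:ℝ)..(2 * π),
        (Ψ (‖x‖ • (Real.cos θ • k + Real.sin θ • (Real.cos φ • h + Real.sin φ • i)), y)
          + Ψ (-(‖x‖ • (Real.cos θ • k + Real.sin θ • (Real.cos φ • h + Real.sin φ • i))), y)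
          - Ψ (x, y) - Ψ (-x, y))|
      ≤ 2 * L₂ * ‖(2 : ℝ) • x‖ ^ 2 * (1 - Real.cos θ) := by
  obtain ⟨C, hC0, hkey⟩ := grad_second_deriv_bound Ψ hΨ hΨc
  have hbdd : BddAbove (Set.range fun q : E3 × E3 =>
      ‖fderiv ℝ (fun z => gradient (fun w => Ψ (w, q.2)) z) q.1‖) := by
    refine ⟨C, ?_⟩
    rintro _ ⟨⟨z, b⟩, rfl⟩
    obtain ⟨M, hM, hMC⟩ := hkey b z
    have : fderiv ℝ (fun z => gradient (fun w => Ψ (w, b)) z) z = M := hM.fderiv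
    simpa [this] using hMC
  set f : E3 → ℝ := fun w => Ψ (w, y) with hfdef
  set g : E3 → E3 := gradient f with hgdef
  have hL2le : ∀ z : E3, ‖fderiv ℝ g z‖ ≤ L₂ := by
    intro z
    rw [hL₂]
    exact le_ciSup hbdd (z, y)
  have hL20 : 0 ≤ L₂ := le_trans (norm_nonneg _) (hL2le 0)
  have hgdiff : ∀ z : E3, DifferentiableAt ℝ g z := fun z =>
    ((hkey y z).choose_spec.1).differentiableAt
  have hglip : ∀ u v : E3, ‖g u - g v‖ ≤ L₂ * ‖u - v‖ := by
    intro u v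
    exact convex_univ.norm_image_sub_le_of_norm_fderiv_le (fun z _ => hgdiff z)
      (fun z _ => hL2le z) (Set.mem_univ v) (Set.mem_univ u)
  have hfc : ContDiff ℝ ((⊤ : ℕ∞) : WithTop ℕ∞) f := hΨ.comp (contDiff_id.prodMk contDiff_const)
  have hfd : ∀ u : E3, fderiv ℝ f u = InnerProductSpace.toDual ℝ E3 (g u) := fun u =>
    ((InnerProductSpace.toDual ℝ E3).apply_symm_apply _).symm
  have htaylor : ∀ b a : E3, |f a - f b - ⟪g b, a - b⟫| ≤ L₂ * ‖a - b‖ ^ 2 := by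
    intro b a
    have hseg : ∀ u ∈ segment ℝ b a, ‖u - b‖ ≤ ‖a - b‖ := by
      intro u hu
      rw [segment_eq_image'] at hu
      obtain ⟨t, ht, rfl⟩ := hu
      simp only [add_sub_cancel_left, norm_smul, Real.norm_eq_abs]
      rw [abs_of_nonneg ht.1]
      nlinarith [norm_nonneg (a - b), ht.2]
    have bound : ∀ u ∈ segment ℝ b a, ‖fderiv ℝ f u - fderiv ℝ f b‖ ≤ L₂ * ‖a - b‖ := by
      intro u hu
      rw [hfd u, hfd b, ← map_sub, LinearIsometryEquiv.norm_map]
      calc ‖g u - g b‖ ≤ L₂ * ‖u - b‖ := hglip u b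
        _ ≤ L₂ * ‖a - b‖ := mul_le_mul_of_nonneg_left (hseg u hu) hL20
    have := (convex_segment b a).norm_image_sub_le_of_norm_fderiv_le'
      (fun u _ => (hfc.differentiable (by simp)).differentiableAt)
      bound (left_mem_segment ℝ b a) (right_mem_segment ℝ b a)
    have hinner : (fderiv ℝ f b) (a - b) = ⟪g b, a - b⟫ := by
      rw [hgdef]
      exact (InnerProductSpace.toDual_symm_apply).symm
    rw [hinner] at this
    calc |f a - f b - ⟪g b, a - b⟫| ≤ L₂ * ‖a - b‖ * ‖a - b‖ := this
      _ = L₂ * ‖a - b‖ ^ 2 := by ring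
  -- geometry
  have hr0 : (0:ℝ) < ‖x‖ := norm_pos_iff.mpr hx
  have hxk : x = ‖x‖ • k := by
    rw [hk, smul_smul, mul_inv_cancel₀ (ne_of_gt hr0), one_smul]
  have hknorm : ‖k‖ = 1 := by
    rw [hk, norm_smul, norm_inv, norm_norm, inv_mul_cancel₀ (ne_of_gt hr0)]
  have hkk : ⟪k, k⟫ = 1 := by rw [real_inner_self_eq_norm_sq, hknorm]; norm_num
  have hhh : ⟪h, h⟫ = 1 := by rw [real_inner_self_eq_norm_sq, hh]; norm_num
  have hii : ⟪i, i⟫ = 1 := by rw [real_inner_self_eq_norm_sq, hi]; norm_num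
  have hhk : ⟪h, k⟫ = 0 := by rw [real_inner_comm]; exact hkh
  have hik : ⟪i, k⟫ = 0 := by rw [real_inner_comm]; exact hki
  have hih : ⟪i, h⟫ = 0 := by rw [real_inner_comm]; exact hhi
  set a : ℝ → E3 := fun φ =>
    ‖x‖ • (Real.cos θ • k + Real.sin θ • (Real.cos φ • h + Real.sin φ • i)) with hadef
  set u : ℝ → E3 := fun φ =>
    (Real.cos θ - 1) • k + (Real.sin θ * Real.cos φ) • h + (Real.sin θ * Real.sin φ) • i
    with hudef
  have hax : ∀ φ, a φ - x = ‖x‖ • u φ := by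
    intro φ
    have h1 : a φ - x = a φ - ‖x‖ • k := by rw [← hxk]
    rw [h1, hadef, hudef]
    module
  have hun : ∀ φ, ‖u φ‖ ^ 2 = 2 - 2 * Real.cos θ := by
    intro φ
    rw [← real_inner_self_eq_norm_sq, hudef]
    simp only [inner_add_left, inner_add_right, real_inner_smul_left, real_inner_smul_right,
      hkk, hhh, hii, hkh, hki, hhi, hhk, hik, hih]
    nlinarith [Real.sin_sq_add_cos_sq θ, Real.sin_sq_add_cos_sq φ]
  have hnorm2 : ∀ φ, ‖a φ - x‖ ^ 2 = ‖x‖ ^ 2 * (2 - 2 * Real.cos θ) := by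
    intro φ
    rw [hax φ, norm_smul, Real.norm_eq_abs, abs_of_pos hr0, mul_pow, hun φ]
  set w : E3 := g x - g (-x) with hwdef
  have hwn : ‖w‖ ≤ L₂ * (2 * ‖x‖) := by
    have h2 : ‖x - -x‖ = 2 * ‖x‖ := by
      rw [sub_neg_eq_add, ← two_smul ℝ x, norm_smul]
      norm_num
    calc ‖w‖ ≤ L₂ * ‖x - -x‖ := hglip x (-x)
      _ = L₂ * (2 * ‖x‖) := by rw [h2]
  have hwx : |⟪w, x⟫| ≤ L₂ * (2 * ‖x‖) * ‖x‖ :=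
    le_trans (abs_real_inner_le_norm w x)
      (mul_le_mul_of_nonneg_right hwn (norm_nonneg x))
  -- the Taylor remainder
  set T : ℝ → ℝ := fun φ =>
    (f (a φ) - f x - ⟪g x, a φ - x⟫) + (f (-(a φ)) - f (-x) - ⟪g (-x), x - a φ⟫) with hTdef
  have hTbound : ∀ φ, |T φ| ≤ 2 * (L₂ * (‖x‖ ^ 2 * (2 - 2 * Real.cos θ))) := by
    intro φ
    have t1 : |f (a φ) - f x - ⟪g x, a φ - x⟫| ≤ L₂ * (‖x‖ ^ 2 * (2 - 2 * Real.cos θ)) := by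
      have := htaylor x (a φ)
      rw [hnorm2 φ] at this
      linarith [this]
    have t2 : |f (-(a φ)) - f (-x) - ⟪g (-x), x - a φ⟫| ≤
        L₂ * (‖x‖ ^ 2 * (2 - 2 * Real.cos θ)) := by
      have := htaylor (-x) (-(a φ))
      have he : -(a φ) - -x = -(a φ - x) := by abel
      rw [he, norm_neg, hnorm2 φ,
        show (-(a φ - x) : E3) = x - a φ by abel] at this
      linarith [this]
    calc |T φ| ≤ |f (a φ) - f x - ⟪g x, a φ - x⟫|
        + |f (-(a φ)) - f (-x) - ⟪g (-x), x - a φ⟫| := abs_add_le _ _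
      _ ≤ 2 * (L₂ * (‖x‖ ^ 2 * (2 - 2 * Real.cos θ))) := by linarith
  have hdecomp : ∀ φ, f (a φ) + f (-(a φ)) - f x - f (-x) = T φ + ⟪w, a φ - x⟫ := by
    intro φ
    rw [hTdef, hwdef]
    simp only [inner_sub_left]
    have he3 : (x - a φ : E3) = -(a φ - x) := by abel
    rw [he3, inner_neg_right]
    ring
  -- continuity and integrability
  have hconta : Continuous a := by
    rw [hadef]; fun_prop
  have hcontf : Continuous f := hΨ.continuous.comp (continuous_id.prodMk continuous_const)
  have hcontT : Continuous T := by
    apply Continuous.add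
    · exact ((hcontf.comp hconta).sub continuous_const).sub
        (continuous_const.inner (hconta.sub continuous_const))
    · exact ((hcontf.comp (hconta.neg)).sub continuous_const).sub
        (continuous_const.inner (continuous_const.sub hconta))
  have hIT : IntervalIntegrable T MeasureTheory.volume 0 (2 * π) :=
    hcontT.intervalIntegrable _ _
  have hIinner : IntervalIntegrable (fun φ => ⟪w, a φ - x⟫) MeasureTheory.volume 0 (2 * π) :=
    (continuous_const.inner (hconta.sub continuous_const)).intervalIntegrable _ _
  -- the linear term integrates to the k-component
  set c0 : ℝ := ⟪w, k⟫ with hc0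
  set c1 : ℝ := ⟪w, h⟫ with hc1
  set c2 : ℝ := ⟪w, i⟫ with hc2
  have hinner : ∀ φ, ⟪w, a φ - x⟫ =
      (‖x‖ * (Real.cos θ - 1) * c0) + (‖x‖ * Real.sin θ * c1) * Real.cos φ
        + (‖x‖ * Real.sin θ * c2) * Real.sin φ := by
    intro φ
    rw [hax φ, hudef]
    simp only [real_inner_smul_right, inner_add_right, hc0, hc1, hc2]
    ring
  have hlin : (∫ φ in (0:ℝ)..(2 * π), ⟪w, a φ - x⟫)
      = (2 * π) * (‖x‖ * (Real.cos θ - 1) * c0) := by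
    rw [intervalIntegral.integral_congr (g := fun φ =>
      (‖x‖ * (Real.cos θ - 1) * c0) + (‖x‖ * Real.sin θ * c1) * Real.cos φ
        + (‖x‖ * Real.sin θ * c2) * Real.sin φ) (fun φ _ => hinner φ)]
    rw [intervalIntegral.integral_add (intervalIntegrable_const.add
        ((show Continuous fun φ => ‖x‖ * Real.sin θ * c1 * Real.cos φ from
            continuous_const.mul Real.continuous_cos).intervalIntegrable _ _))
        ((show Continuous fun φ => ‖x‖ * Real.sin θ * c2 * Real.sin φ from
            continuous_const.mul Real.continuous_sin).intervalIntegrable _ _),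
      intervalIntegral.integral_add intervalIntegrable_const
        ((show Continuous fun φ => ‖x‖ * Real.sin θ * c1 * Real.cos φ from
            continuous_const.mul Real.continuous_cos).intervalIntegrable _ _),
      intervalIntegral.integral_const, intervalIntegral.integral_const_mul,
      intervalIntegral.integral_const_mul, integral_cos, integral_sin]
    simp [Real.sin_two_pi, Real.cos_two_pi]
  -- assemble
  have hIeq : (∫ φ in (0:ℝ)..(2 * π), (f (a φ) + f (-(a φ)) - f x - f (-x)))
      = (∫ φ in (0:ℝ)..(2 * π), T φ) + ∫ φ in (0:ℝ)..(2 * π), ⟪w, a φ - x⟫ := by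
    rw [← intervalIntegral.integral_add hIT hIinner]
    exact intervalIntegral.integral_congr (fun φ _ => hdecomp φ)
  have hπ : (0:ℝ) < π := Real.pi_pos
  have hS1 : |∫ φ in (0:ℝ)..(2 * π), T φ|
      ≤ 2 * (L₂ * (‖x‖ ^ 2 * (2 - 2 * Real.cos θ))) * (2 * π) := by
    have := intervalIntegral.norm_integral_le_of_norm_le_const
      (C := 2 * (L₂ * (‖x‖ ^ 2 * (2 - 2 * Real.cos θ)))) (f := T) (a := 0) (b := 2 * π)
      (fun φ _ => by rw [Real.norm_eq_abs]; exact hTbound φ)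
    rw [Real.norm_eq_abs] at this
    calc |∫ φ in (0:ℝ)..(2 * π), T φ|
        ≤ 2 * (L₂ * (‖x‖ ^ 2 * (2 - 2 * Real.cos θ))) * |2 * π - 0| := this
      _ = 2 * (L₂ * (‖x‖ ^ 2 * (2 - 2 * Real.cos θ))) * (2 * π) := by
          rw [sub_zero, abs_of_pos (by positivity)]
  have hA : |‖x‖ * (Real.cos θ - 1) * c0| ≤ (1 - Real.cos θ) * (L₂ * (2 * ‖x‖) * ‖x‖) := by
    have hxc : ‖x‖ * c0 = ⟪w, x⟫ := by
      rw [hc0, ← real_inner_smul_right, ← hxk]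
    have h1mc : (0:ℝ) ≤ 1 - Real.cos θ := by linarith [Real.cos_le_one θ]
    calc |‖x‖ * (Real.cos θ - 1) * c0| = |Real.cos θ - 1| * |‖x‖ * c0| := by
          rw [← abs_mul]; ring_nf
      _ = (1 - Real.cos θ) * |⟪w, x⟫| := by
          rw [hxc, abs_sub_comm, abs_of_nonneg h1mc]
      _ ≤ (1 - Real.cos θ) * (L₂ * (2 * ‖x‖) * ‖x‖) :=
          mul_le_mul_of_nonneg_left hwx h1mc
  have h1mc : (0:ℝ) ≤ 1 - Real.cos θ := by linarith [Real.cos_le_one θ]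
  have h2x : ‖(2:ℝ) • x‖ = 2 * ‖x‖ := by
    rw [norm_smul, Real.norm_eq_abs]; norm_num
  -- final computation
  show |(1 / (2 * π)) * ∫ φ in (0:ℝ)..(2 * π), (f (a φ) + f (-(a φ)) - f x - f (-x))|
      ≤ 2 * L₂ * ‖(2:ℝ) • x‖ ^ 2 * (1 - Real.cos θ)
  rw [hIeq, hlin, h2x]
  rw [abs_mul, abs_of_pos (show (0:ℝ) < 1 / (2 * π) by positivity)]
  rw [div_mul_eq_mul_div, one_mul, div_le_iff₀ (by positivity : (0:ℝ) < 2 * π)]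
  have habs : |(∫ φ in (0:ℝ)..(2 * π), T φ) + 2 * π * (‖x‖ * (Real.cos θ - 1) * c0)|
      ≤ |∫ φ in (0:ℝ)..(2 * π), T φ| + (2 * π) * |‖x‖ * (Real.cos θ - 1) * c0| := by
    calc _ ≤ |∫ φ in (0:ℝ)..(2 * π), T φ| + |2 * π * (‖x‖ * (Real.cos θ - 1) * c0)| :=
          abs_add_le _ _
      _ = _ := by rw [abs_mul, abs_of_pos (by positivity : (0:ℝ) < 2 * π)]
  have hX : (0:ℝ) ≤ L₂ * ‖x‖ ^ 2 * (1 - Real.cos θ) := by positivity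
  nlinarith [hS1, hA, mul_le_mul_of_nonneg_left hA (by positivity : (0:ℝ) ≤ 2 * π),
    mul_nonneg hπ.le hX, hπ]
end
end

section
/- Let ψ ∈ C_c^∞(ℝ³; ℝ), let v, v∗ ∈ ℝ³ with v ≠ v∗, set k = (v − v∗)/|v − v∗|, let (k, h, i) be an orthonormal basis of ℝ³, and fix χ ∈ (0, π/2]. For ε > 0 and φ ∈ [0, 2π] set θ_ε = εχ/π, p(φ) = cos φ · h + sin φ · i, σ_ε(φ) = cos θ_ε · k + sin θ_ε · p(φ), and let v′_{ε,φ}, v∗′_{ε,φ} be the corresponding post-collision velocities. Then lim_{ε↓0} (1/(ε²χ²)) ∫₀^{2π} [ψ(v′_{ε,φ}) + ψ(v∗′_{ε,φ}) − ψ(v) − ψ(v∗)] dφ = (1/8π)[ |v−v∗|² Π[v−v∗] : (D²ψ(v) + D²ψ(v∗)) − 4 (v−v∗) · (∇ψ(v) − ∇ψ(v∗)) ], where A : B = trace(AᵀB) and D²ψ denotes the Hessian. -/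
noncomputable section
open Real MeasureTheory Filter Topology
open scoped RealInnerProductSpace

/-- Post-collision velocity `v' = (v+v∗)/2 + (|v−v∗|/2)σ`. -/
def vPost (v w σ : E3) : E3 := ((2 : ℝ)⁻¹) • (v + w) + (‖v - w‖ / 2) • σ

/-- Post-collision velocity `v∗' = (v+v∗)/2 − (|v−v∗|/2)σ`. -/
def vPostStar (v w σ : E3) : E3 := ((2 : ℝ)⁻¹) • (v + w) - (‖v - w‖ / 2) • σ

/-- Collision direction `σ(θ,φ) = cos θ·k + sin θ·(cos φ·h + sin φ·i)`. -/
def sigmaDir (k h i : E3) (θ φ : ℝ) : E3 :=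
  Real.cos θ • k + Real.sin θ • (Real.cos φ • h + Real.sin φ • i)

def ppAux (h i : E3) (φ : ℝ) : E3 := Real.cos φ • h + Real.sin φ • i
def sdAux (k h i : E3) (θ φ : ℝ) : E3 := (-Real.sin θ) • k + Real.cos θ • ppAux h i φ

def FAux (ψ : E3 → ℝ) (v w k h i : E3) (θ φ : ℝ) : ℝ :=
  ψ (vPost v w (sigmaDir k h i θ φ)) + ψ (vPostStar v w (sigmaDir k h i θ φ)) - ψ v - ψ w

def F1Aux (ψ : E3 → ℝ) (v w k h i : E3) (θ φ : ℝ) : ℝ :=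
  (fderiv ℝ ψ (vPost v w (sigmaDir k h i θ φ))) ((‖v - w‖ / 2) • sdAux k h i θ φ)
  + (fderiv ℝ ψ (vPostStar v w (sigmaDir k h i θ φ))) (-((‖v - w‖ / 2) • sdAux k h i θ φ))

def F2Aux (ψ : E3 → ℝ) (v w k h i : E3) (θ φ : ℝ) : ℝ :=
  (((fderiv ℝ (fderiv ℝ ψ) (vPost v w (sigmaDir k h i θ φ))) ((‖v - w‖ / 2) • sdAux k h i θ φ))
      ((‖v - w‖ / 2) • sdAux k h i θ φ)
    + (fderiv ℝ ψ (vPost v w (sigmaDir k h i θ φ))) ((‖v - w‖ / 2) • -(sigmaDir k h i θ φ)))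
  + (((fderiv ℝ (fderiv ℝ ψ) (vPostStar v w (sigmaDir k h i θ φ)))
        (-((‖v - w‖ / 2) • sdAux k h i θ φ))) (-((‖v - w‖ / 2) • sdAux k h i θ φ))
    + (fderiv ℝ ψ (vPostStar v w (sigmaDir k h i θ φ))) (-((‖v - w‖ / 2) • -(sigmaDir k h i θ φ))))

section Derivs
variable (ψ : E3 → ℝ) (v w k h i : E3) (θ φ : ℝ)

lemma hasDerivAt_sigma : HasDerivAt (fun t => sigmaDir k h i t φ) (sdAux k h i θ φ) θ :=
  ((Real.hasDerivAt_cos θ).smul_const k).add ((Real.hasDerivAt_sin θ).smul_const (ppAux h i φ))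

lemma hasDerivAt_sd : HasDerivAt (fun t => sdAux k h i t φ) (-(sigmaDir k h i θ φ)) θ := by
  have raw := (((Real.hasDerivAt_sin θ).neg).smul_const k).add
    ((Real.hasDerivAt_cos θ).smul_const (ppAux h i φ))
  have : -(sigmaDir k h i θ φ) = -Real.cos θ • k + -Real.sin θ • ppAux h i φ := by
    simp only [sigmaDir, ppAux]; module
  rw [this]
  exact raw

lemma hasDerivAt_c : HasDerivAt (fun t => vPost v w (sigmaDir k h i t φ))
    ((‖v - w‖ / 2) • sdAux k h i θ φ) θ :=
  ((hasDerivAt_sigma k h i θ φ).const_smul (‖v - w‖ / 2)).const_add _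

lemma hasDerivAt_cs : HasDerivAt (fun t => vPostStar v w (sigmaDir k h i t φ))
    (-((‖v - w‖ / 2) • sdAux k h i θ φ)) θ :=
  HasDerivAt.const_sub _ ((hasDerivAt_sigma k h i θ φ).const_smul (‖v - w‖ / 2))

lemma hasDerivAt_F (hψ : ContDiff ℝ (⊤ : ℕ∞) ψ) : HasDerivAt (fun t => FAux ψ v w k h i t φ) (F1Aux ψ v w k h i θ φ) θ := by
  have h1a := ((hψ.differentiable (by simp)) _).hasFDerivAt.comp_hasDerivAt θ
    (hasDerivAt_c v w k h i θ φ)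
  have h1b := ((hψ.differentiable (by simp)) _).hasFDerivAt.comp_hasDerivAt θ
    (hasDerivAt_cs v w k h i θ φ)
  exact ((h1a.add h1b).sub_const (ψ v)).sub_const (ψ w)

lemma hasDerivAt_F1 (hψ : ContDiff ℝ (⊤ : ℕ∞) ψ) : HasDerivAt (fun t => F1Aux ψ v w k h i t φ) (F2Aux ψ v w k h i θ φ) θ := by
  have hψ1 : ContDiff ℝ (⊤ : ℕ∞) (fderiv ℝ ψ) := hψ.fderiv_right (by exact_mod_cast le_top)
  have hA1 := ((hψ1.differentiable (by simp)) _).hasFDerivAt.comp_hasDerivAt θ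
    (hasDerivAt_c v w k h i θ φ)
  have hA2 := ((hψ1.differentiable (by simp)) _).hasFDerivAt.comp_hasDerivAt θ
    (hasDerivAt_cs v w k h i θ φ)
  have hu1 : HasDerivAt (fun t => (‖v - w‖ / 2) • sdAux k h i t φ)
      ((‖v - w‖ / 2) • -(sigmaDir k h i θ φ)) θ :=
    (hasDerivAt_sd k h i θ φ).const_smul (‖v - w‖ / 2)
  have hu2 : HasDerivAt (fun t => -((‖v - w‖ / 2) • sdAux k h i t φ))
      (-((‖v - w‖ / 2) • -(sigmaDir k h i θ φ))) θ := hu1.neg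
  exact (hA1.clm_apply hu1).add (hA2.clm_apply hu2)

end Derivs

section Trig

lemma trig1 (a b : ℝ) : ∫ φ in (0:ℝ)..(2*π), (a * Real.cos φ + b * Real.sin φ) = 0 := by
  rw [intervalIntegral.integral_add (f := fun φ => a * Real.cos φ) (g := fun φ => b * Real.sin φ)
      ((continuous_const.mul Real.continuous_cos).intervalIntegrable _ _)
      ((continuous_const.mul Real.continuous_sin).intervalIntegrable _ _),
    intervalIntegral.integral_const_mul, intervalIntegral.integral_const_mul,
    integral_cos, integral_sin]
  simp

lemma trig2 (a b c d : ℝ) :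
    ∫ φ in (0:ℝ)..(2*π), (a * Real.cos φ ^ 2 + b * (Real.sin φ * Real.cos φ)
      + c * Real.sin φ ^ 2 + d) = (a + c) * π + d * (2 * π) := by
  have i1 : IntervalIntegrable (fun φ => a * Real.cos φ ^ 2) volume 0 (2*π) :=
    (continuous_const.mul (Real.continuous_cos.pow 2)).intervalIntegrable _ _
  have i2 : IntervalIntegrable (fun φ => b * (Real.sin φ * Real.cos φ)) volume 0 (2*π) :=
    (continuous_const.mul (Real.continuous_sin.mul Real.continuous_cos)).intervalIntegrable _ _
  have i3 : IntervalIntegrable (fun φ => c * Real.sin φ ^ 2) volume 0 (2*π) :=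
    (continuous_const.mul (Real.continuous_sin.pow 2)).intervalIntegrable _ _
  have i4 : IntervalIntegrable (fun _ : ℝ => d) volume 0 (2*π) := intervalIntegrable_const
  rw [intervalIntegral.integral_add (((i1.add i2).add i3)) i4,
    intervalIntegral.integral_add (i1.add i2) i3,
    intervalIntegral.integral_add i1 i2,
    intervalIntegral.integral_const_mul, intervalIntegral.integral_const_mul,
    intervalIntegral.integral_const_mul,
    integral_cos_sq, integral_sin_mul_cos₁,
    integral_sin_sq, intervalIntegral.integral_const]
  simp [Real.sin_two_pi, Real.cos_two_pi, smul_eq_mul]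
  ring

end Trig

section Bridge

lemma inner_fderiv_gradient (ψ : E3 → ℝ) (z x y : E3) :
    ⟪x, (fderiv ℝ (gradient ψ) z) y⟫ = (fderiv ℝ (fderiv ℝ ψ) z y) x := by
  have hgc : gradient ψ = ⇑(InnerProductSpace.toDual ℝ E3).symm ∘ (fderiv ℝ ψ) := rfl
  rw [hgc, LinearIsometryEquiv.comp_fderiv]
  simp only [ContinuousLinearMap.coe_comp', Function.comp_apply, LinearIsometryEquiv.coe_coe]
  rw [real_inner_comm]
  exact InnerProductSpace.toDual_symm_apply

lemma inner_gradient (ψ : E3 → ℝ) (z x : E3) : ⟪x, gradient ψ z⟫ = fderiv ℝ ψ z x := by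
  rw [real_inner_comm]
  exact InnerProductSpace.toDual_symm_apply

lemma trace_orthonormal (A : E3 →L[ℝ] E3) (k h i : E3) (horth : Orthonormal ℝ ![k, h, i]) :
    LinearMap.trace ℝ E3 (A : E3 →ₗ[ℝ] E3) = ⟪k, A k⟫ + ⟪h, A h⟫ + ⟪i, A i⟫ := by
  have hcard : Fintype.card (Fin 3) = Module.finrank ℝ E3 := by simp
  let b : Module.Basis (Fin 3) ℝ E3 :=
    basisOfLinearIndependentOfCardEqFinrank horth.linearIndependent hcard
  have hb : ⇑b = ![k, h, i] := coe_basisOfLinearIndependentOfCardEqFinrank _ _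
  have horth' : Orthonormal ℝ b := by rwa [hb]
  have hrepr : ∀ (x : E3) (j : Fin 3), b.repr x j = ⟪b j, x⟫ := by
    intro x j
    have h1 := (b.toOrthonormalBasis horth').repr_apply_apply x j
    rw [← OrthonormalBasis.coe_toBasis_repr_apply, Module.Basis.toBasis_toOrthonormalBasis] at h1
    rw [h1, Module.Basis.coe_toOrthonormalBasis]
  rw [LinearMap.trace_eq_matrix_trace ℝ b, Matrix.trace]
  simp only [Matrix.diag, LinearMap.toMatrix_apply, Fin.sum_univ_three, hrepr,
    ContinuousLinearMap.coe_coe, hb]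
  simp [Matrix.cons_val_zero, Matrix.cons_val_one]

end Bridge

lemma key_limit (f f₁ f₂ : ℝ → ℝ → ℝ)
    (hd1 : ∀ θ φ, HasDerivAt (fun t => f t φ) (f₁ θ φ) θ)
    (hd2 : ∀ θ φ, HasDerivAt (fun t => f₁ t φ) (f₂ θ φ) θ)
    (C : ℝ) (hC : ∀ θ φ, |f₂ θ φ| ≤ C)
    (hcf : ∀ θ, Continuous (fun φ => f θ φ))
    (hcf1 : Continuous (fun φ => f₁ 0 φ))
    (h1 : (∫ φ in (0:ℝ)..(2*π), f₁ 0 φ) = 0) :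
    Tendsto (fun θ : ℝ => (θ^2)⁻¹ * ∫ φ in (0:ℝ)..(2*π), (f θ φ - f 0 φ))
      (𝓝[>] (0:ℝ)) (𝓝 ((∫ φ in (0:ℝ)..(2*π), f₂ 0 φ) / 2)) := by
  set G : ℝ → ℝ → ℝ := fun θ φ => (f θ φ - f 0 φ - θ * f₁ 0 φ) / θ^2 with hG
  have hnum : ∀ φ t, HasDerivAt (fun t => f t φ - f 0 φ - t * f₁ 0 φ) (f₁ t φ - f₁ 0 φ) t :=
    fun φ t => ((hd1 t φ).sub_const _).sub (hasDerivAt_mul_const _)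
  have hmeas : ∀ θ : ℝ, Continuous (fun φ => G θ φ) := fun θ =>
    (((hcf θ).sub (hcf 0)).sub (continuous_const.mul hcf1)).div_const _
  -- uniform bound
  have h_bound : ∀ θ : ℝ, 0 < θ → ∀ φ, |G θ φ| ≤ C := by
    intro θ hθ φ
    have inner : ∀ t ∈ Set.Icc (0:ℝ) θ, ‖f₁ t φ - f₁ 0 φ‖ ≤ C * θ := by
      intro t ht
      have h := Convex.norm_image_sub_le_of_norm_hasDerivWithin_le
        (f := fun t => f₁ t φ) (f' := fun t => f₂ t φ) (s := Set.Icc (0:ℝ) θ)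
        (fun x _ => (hd2 x φ).hasDerivWithinAt)
        (fun x _ => by simpa [Real.norm_eq_abs] using hC x φ)
        (convex_Icc _ _) (Set.left_mem_Icc.2 hθ.le) ht
      have : ‖t - 0‖ ≤ θ := by
        rw [sub_zero, Real.norm_eq_abs, abs_of_nonneg ht.1]; exact ht.2
      calc ‖f₁ t φ - f₁ 0 φ‖ ≤ C * ‖t - 0‖ := h
        _ ≤ C * θ := by
            have hC0 : 0 ≤ C := le_trans (abs_nonneg _) (hC 0 0)
            exact mul_le_mul_of_nonneg_left this hC0
    have outer : ‖(f θ φ - f 0 φ - θ * f₁ 0 φ) - (f 0 φ - f 0 φ - 0 * f₁ 0 φ)‖ ≤ (C * θ) * ‖θ - 0‖ :=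
      Convex.norm_image_sub_le_of_norm_hasDerivWithin_le
        (f := fun t => f t φ - f 0 φ - t * f₁ 0 φ) (f' := fun t => f₁ t φ - f₁ 0 φ)
        (s := Set.Icc (0:ℝ) θ)
        (fun x _ => (hnum φ x).hasDerivWithinAt) inner
        (convex_Icc _ _) (Set.left_mem_Icc.2 hθ.le) (Set.right_mem_Icc.2 hθ.le)
    have h2 : |f θ φ - f 0 φ - θ * f₁ 0 φ| ≤ C * θ^2 := by
      have := outer
      rw [sub_zero, Real.norm_eq_abs, Real.norm_eq_abs, abs_of_nonneg hθ.le] at this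
      simpa [pow_two, mul_assoc] using this
    have hθ2 : (0:ℝ) < θ^2 := by positivity
    rw [hG]
    simp only [abs_div, abs_of_nonneg hθ2.le, div_le_iff₀ hθ2]
    calc |f θ φ - f 0 φ - θ * f₁ 0 φ| ≤ C * θ^2 := h2
      _ = C * θ^2 := rfl
  -- pointwise limit
  have h_lim : ∀ φ, Tendsto (fun θ => G θ φ) (𝓝[>] (0:ℝ)) (𝓝 (f₂ 0 φ / 2)) := by
    intro φ
    have hmono : 𝓝[>] (0:ℝ) ≤ 𝓝[≠] (0:ℝ) :=
      nhdsWithin_mono 0 (fun x hx => by simpa using ne_of_gt hx)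
    have hslope := hasDerivAt_iff_tendsto_slope.1 (hd2 0 φ)
    have hdiv : Tendsto (fun t => (f₁ t φ - f₁ 0 φ) / (2 * t)) (𝓝[>] (0:ℝ)) (𝓝 (f₂ 0 φ / 2)) := by
      have := (hslope.mono_left hmono).div_const 2
      refine this.congr fun t => ?_
      rw [slope_def_field]; ring
    apply HasDerivAt.lhopital_zero_nhdsGT (f' := fun t => f₁ t φ - f₁ 0 φ)
      (g' := fun t : ℝ => 2 * t)
    · exact Eventually.of_forall fun t => hnum φ t
    · exact Eventually.of_forall fun t => by simpa [mul_comm] using hasDerivAt_pow 2 t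
    · filter_upwards [self_mem_nhdsWithin] with t ht
      exact mul_ne_zero two_ne_zero (ne_of_gt ht)
    · have := (hnum φ 0).continuousAt.continuousWithinAt (s := Set.Ioi (0:ℝ))
      simpa [ContinuousWithinAt] using this
    · have : ContinuousAt (fun t : ℝ => t^2) 0 := (continuous_pow 2).continuousAt
      simpa [ContinuousWithinAt] using this.continuousWithinAt (s := Set.Ioi (0:ℝ))
    · exact hdiv
  -- DCT
  have hDCT : Tendsto (fun θ => ∫ φ in (0:ℝ)..(2*π), G θ φ) (𝓝[>] (0:ℝ))
      (𝓝 (∫ φ in (0:ℝ)..(2*π), f₂ 0 φ / 2)) := by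
    apply intervalIntegral.tendsto_integral_filter_of_dominated_convergence (fun _ => C)
    · exact Eventually.of_forall fun θ => (hmeas θ).aestronglyMeasurable
    · filter_upwards [self_mem_nhdsWithin] with θ hθ
      exact Eventually.of_forall fun φ _ => by
        simpa [Real.norm_eq_abs] using h_bound θ hθ φ
    · exact intervalIntegrable_const
    · exact Eventually.of_forall fun φ _ => h_lim φ
  rw [show (∫ φ in (0:ℝ)..(2*π), f₂ 0 φ) / 2 = ∫ φ in (0:ℝ)..(2*π), f₂ 0 φ / 2 by
    rw [intervalIntegral.integral_div]]
  refine hDCT.congr' ?_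
  filter_upwards [self_mem_nhdsWithin] with θ hθ
  have hθ' : (0:ℝ) < θ := hθ
  have hθ0 : (θ:ℝ)^2 ≠ 0 := by positivity
  have hint1 : IntervalIntegrable (fun φ => f θ φ - f 0 φ) volume 0 (2*π) :=
    ((hcf θ).sub (hcf 0)).intervalIntegrable _ _
  have hint2 : IntervalIntegrable (fun φ => θ * f₁ 0 φ) volume 0 (2*π) :=
    (continuous_const.mul hcf1).intervalIntegrable _ _
  calc (∫ φ in (0:ℝ)..(2*π), G θ φ)
      = ∫ φ in (0:ℝ)..(2*π), (θ^2)⁻¹ * ((f θ φ - f 0 φ) - θ * f₁ 0 φ) := by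
        exact intervalIntegral.integral_congr fun φ _ => by
          simp only [hG, div_eq_inv_mul]
    _ = (θ^2)⁻¹ * ∫ φ in (0:ℝ)..(2*π), ((f θ φ - f 0 φ) - θ * f₁ 0 φ) := by
        rw [intervalIntegral.integral_const_mul]
    _ = (θ^2)⁻¹ * ((∫ φ in (0:ℝ)..(2*π), (f θ φ - f 0 φ)) - θ * ∫ φ in (0:ℝ)..(2*π), f₁ 0 φ) := by
        rw [intervalIntegral.integral_sub hint1 hint2, intervalIntegral.integral_const_mul]
    _ = (θ^2)⁻¹ * ∫ φ in (0:ℝ)..(2*π), (f θ φ - f 0 φ) := by rw [h1]; ring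


set_option maxHeartbeats 2000000 in
/-- Second-order behaviour of the circle average of the discrete gradient in the grazing
regime: `(1/(ε²χ²)) ∫₀^{2π} ∇̄ψ dφ` converges, as `ε ↓ 0`, to
`(1/8π)[|v−v∗|² Π[v−v∗] : (D²ψ(v) + D²ψ(v∗)) − 4(v−v∗)·(∇ψ(v) − ∇ψ(v∗))]`,
where `Π[z] : A = tr A − |z|⁻²⟨z, A z⟩` is the Frobenius pairing with the projection
onto `{z}^⊥`. -/
theorem discrete_gradient_circle_average_grazing_limit
    (ψ : E3 → ℝ) (hψ : ContDiff ℝ (⊤ : ℕ∞) ψ) (hψc : HasCompactSupport ψ)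
    (v w : E3) (hvw : v ≠ w)
    (k h i : E3) (hk : k = ‖v - w‖⁻¹ • (v - w))
    (hh : ‖h‖ = 1) (hi : ‖i‖ = 1)
    (hkh : ⟪k, h⟫ = 0) (hki : ⟪k, i⟫ = 0) (hhi : ⟪h, i⟫ = 0)
    (χ : ℝ) (hχ : χ ∈ Set.Ioc 0 (π / 2)) :
    Filter.Tendsto (fun ε : ℝ =>
        (ε ^ 2 * χ ^ 2)⁻¹ * ∫ φ in (0:ℝ)..(2 * π),
          (ψ (vPost v w (sigmaDir k h i (ε * χ / π) φ))
            + ψ (vPostStar v w (sigmaDir k h i (ε * χ / π) φ)) - ψ v - ψ w))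
      (𝓝[>] (0 : ℝ))
      (𝓝 ((1 / (8 * π)) *
        (‖v - w‖ ^ 2 *
            (LinearMap.trace ℝ E3
                ((fderiv ℝ (gradient ψ) v + fderiv ℝ (gradient ψ) w : E3 →L[ℝ] E3) :
                  E3 →ₗ[ℝ] E3)
              - (‖v - w‖ ^ 2)⁻¹ *
                  ⟪v - w, (fderiv ℝ (gradient ψ) v + fderiv ℝ (gradient ψ) w) (v - w)⟫)
          - 4 * ⟪v - w, gradient ψ v - gradient ψ w⟫))) := by
  obtain ⟨hχ0, hχle⟩ := hχ
  have hπ : (0:ℝ) < π := Real.pi_pos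
  have hu0 : v - w ≠ 0 := sub_ne_zero.2 hvw
  have hR : (0:ℝ) < ‖v - w‖ := norm_pos_iff.mpr hu0
  -- basic geometric facts
  have hknorm : ‖k‖ = 1 := by
    rw [hk, norm_smul, Real.norm_eq_abs, abs_of_pos (inv_pos.2 hR), inv_mul_cancel₀ hR.ne']
  have hrk : (‖v - w‖ / 2) • k = (2⁻¹ : ℝ) • (v - w) := by
    rw [hk, smul_smul]
    congr 1
    field_simp
  have hσ0 : ∀ φ, sigmaDir k h i 0 φ = k := by intro φ; simp [sigmaDir]
  have hsd0 : ∀ φ, sdAux k h i 0 φ = ppAux h i φ := by intro φ; simp [sdAux]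
  have hc0 : ∀ φ, vPost v w (sigmaDir k h i 0 φ) = v := by
    intro φ
    rw [vPost, hσ0, hrk]
    module
  have hcs0 : ∀ φ, vPostStar v w (sigmaDir k h i 0 φ) = w := by
    intro φ
    rw [vPostStar, hσ0, hrk]
    module
  have hF0 : ∀ φ, FAux ψ v w k h i 0 φ = 0 := by
    intro φ; rw [FAux, hc0, hcs0]; ring
  -- bounds
  have hψ1 : ContDiff ℝ (⊤ : ℕ∞) (fderiv ℝ ψ) := hψ.fderiv_right (by exact_mod_cast le_top)
  have hψ2 : ContDiff ℝ (⊤ : ℕ∞) (fderiv ℝ (fderiv ℝ ψ)) :=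
    hψ1.fderiv_right (by exact_mod_cast le_top)
  obtain ⟨M1, hM1⟩ := (hψc.fderiv (𝕜 := ℝ)).exists_bound_of_continuous hψ1.continuous
  obtain ⟨M2, hM2⟩ : ∃ M2, ∀ x, ‖fderiv ℝ (fderiv ℝ ψ) x‖ ≤ M2 := by
    have hc : Continuous (fderiv ℝ (fderiv ℝ ψ)) := hψ2.continuous
    obtain ⟨M, hM⟩ := IsCompact.exists_bound_of_continuousOn (E := E3 →L[ℝ] E3 →L[ℝ] ℝ)
      (f := fderiv ℝ (fderiv ℝ ψ)) hψc.isCompact (hc.continuousOn)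
    refine ⟨max M 0, fun x => ?_⟩
    by_cases hx : x ∈ tsupport ψ
    · exact (hM x hx).trans (le_max_left _ _)
    · have h1 : x ∉ tsupport (fderiv ℝ ψ) := fun h => hx (tsupport_fderiv_subset ℝ h)
      have h2 : fderiv ℝ (fderiv ℝ ψ) x = 0 := fderiv_of_notMem_tsupport ℝ h1
      rw [h2, ContinuousLinearMap.opNorm_zero]
      exact le_max_right _ _
  have hM1' : (0:ℝ) ≤ M1 := le_trans (norm_nonneg _) (hM1 0)
  have hM2' : (0:ℝ) ≤ M2 := le_trans (ContinuousLinearMap.opNorm_nonneg _) (hM2 0)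
  have hpp : ∀ φ, ‖ppAux h i φ‖ ≤ 2 := by
    intro φ
    calc ‖ppAux h i φ‖ ≤ ‖Real.cos φ • h‖ + ‖Real.sin φ • i‖ := norm_add_le _ _
      _ = |Real.cos φ| + |Real.sin φ| := by
          rw [norm_smul, norm_smul, hh, hi, Real.norm_eq_abs, Real.norm_eq_abs]; ring
      _ ≤ 2 := by
          have := Real.abs_cos_le_one φ; have := Real.abs_sin_le_one φ; linarith
  have hsdb : ∀ θ φ, ‖sdAux k h i θ φ‖ ≤ 3 := by
    intro θ φ
    calc ‖sdAux k h i θ φ‖ ≤ ‖(-Real.sin θ) • k‖ + ‖Real.cos θ • ppAux h i φ‖ := norm_add_le _ _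
      _ ≤ |Real.sin θ| * 1 + |Real.cos θ| * 2 := by
          rw [norm_smul, norm_smul, hknorm, Real.norm_eq_abs, Real.norm_eq_abs, abs_neg]
          gcongr
          exact hpp φ
      _ ≤ 3 := by
          have := Real.abs_cos_le_one θ; have := Real.abs_sin_le_one θ; nlinarith
  have hσb : ∀ θ φ, ‖sigmaDir k h i θ φ‖ ≤ 3 := by
    intro θ φ
    calc ‖sigmaDir k h i θ φ‖ ≤ ‖Real.cos θ • k‖ + ‖Real.sin θ • (Real.cos φ • h + Real.sin φ • i)‖ :=
          norm_add_le _ _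
      _ ≤ |Real.cos θ| * 1 + |Real.sin θ| * 2 := by
          rw [norm_smul, norm_smul, hknorm, Real.norm_eq_abs, Real.norm_eq_abs]
          gcongr
          exact hpp φ
      _ ≤ 3 := by
          have := Real.abs_cos_le_one θ; have := Real.abs_sin_le_one θ; nlinarith
  set ρ : ℝ := (‖v - w‖ / 2) * 3 with hρdef
  have hρ : (0:ℝ) ≤ ρ := by positivity
  have hvec1 : ∀ θ φ, ‖(‖v - w‖ / 2) • sdAux k h i θ φ‖ ≤ ρ := by
    intro θ φ
    rw [norm_smul, Real.norm_eq_abs, abs_of_nonneg (by positivity : (0:ℝ) ≤ ‖v - w‖/2)]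
    exact mul_le_mul_of_nonneg_left (hsdb θ φ) (by positivity)
  have hvec2 : ∀ θ φ, ‖(‖v - w‖ / 2) • -(sigmaDir k h i θ φ)‖ ≤ ρ := by
    intro θ φ
    rw [norm_smul, Real.norm_eq_abs, abs_of_nonneg (by positivity : (0:ℝ) ≤ ‖v - w‖/2), norm_neg]
    exact mul_le_mul_of_nonneg_left (hσb θ φ) (by positivity)
  have happ1 : ∀ (x a : E3), ‖a‖ ≤ ρ → |fderiv ℝ ψ x a| ≤ M1 * ρ := by
    intro x a ha
    calc |fderiv ℝ ψ x a| ≤ ‖fderiv ℝ ψ x‖ * ‖a‖ := (fderiv ℝ ψ x).le_opNorm a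
      _ ≤ M1 * ρ := mul_le_mul (hM1 x) ha (norm_nonneg _) hM1'
  have happ2 : ∀ (x a b : E3), ‖a‖ ≤ ρ → ‖b‖ ≤ ρ →
      |(fderiv ℝ (fderiv ℝ ψ) x a) b| ≤ M2 * ρ * ρ := by
    intro x a b ha hb
    calc |(fderiv ℝ (fderiv ℝ ψ) x a) b| ≤ ‖fderiv ℝ (fderiv ℝ ψ) x a‖ * ‖b‖ :=
          (fderiv ℝ (fderiv ℝ ψ) x a).le_opNorm b
      _ ≤ (M2 * ρ) * ρ := by
          apply mul_le_mul _ hb (norm_nonneg _) (by positivity)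
          calc ‖fderiv ℝ (fderiv ℝ ψ) x a‖ ≤ ‖fderiv ℝ (fderiv ℝ ψ) x‖ * ‖a‖ :=
                (fderiv ℝ (fderiv ℝ ψ) x).le_opNorm a
            _ ≤ M2 * ρ := mul_le_mul (hM2 x) ha (norm_nonneg _) hM2'
  have hC : ∀ θ φ, |F2Aux ψ v w k h i θ φ| ≤ (M2 * ρ * ρ + M1 * ρ) + (M2 * ρ * ρ + M1 * ρ) := by
    intro θ φ
    rw [F2Aux]
    refine le_trans (abs_add_le _ _) (add_le_add ?_ ?_)
    · refine le_trans (abs_add_le _ _) (add_le_add ?_ ?_)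
      · exact happ2 _ _ _ (hvec1 θ φ) (hvec1 θ φ)
      · exact happ1 _ _ (hvec2 θ φ)
    · refine le_trans (abs_add_le _ _) (add_le_add ?_ ?_)
      · have := happ2 (vPostStar v w (sigmaDir k h i θ φ))
          (-((‖v - w‖ / 2) • sdAux k h i θ φ)) (-((‖v - w‖ / 2) • sdAux k h i θ φ))
          (by rw [norm_neg]; exact hvec1 θ φ) (by rw [norm_neg]; exact hvec1 θ φ)
        exact this
      · have := happ1 (vPostStar v w (sigmaDir k h i θ φ))
          (-((‖v - w‖ / 2) • -(sigmaDir k h i θ φ))) (by rw [norm_neg]; exact hvec2 θ φ)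
        exact this
  -- continuity in φ
  have hσcont : ∀ θ, Continuous fun φ => sigmaDir k h i θ φ := by
    intro θ; simp only [sigmaDir]; fun_prop
  have hccont : ∀ θ, Continuous fun φ => vPost v w (sigmaDir k h i θ φ) := by
    intro θ; simp only [vPost]; exact continuous_const.add ((hσcont θ).const_smul (‖v - w‖ / 2))
  have hcscont : ∀ θ, Continuous fun φ => vPostStar v w (sigmaDir k h i θ φ) := by
    intro θ; simp only [vPostStar]; exact continuous_const.sub ((hσcont θ).const_smul (‖v - w‖ / 2))
  have hcf : ∀ θ, Continuous fun φ => FAux ψ v w k h i θ φ := by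
    intro θ
    simp only [FAux]
    exact (((hψ.continuous.comp (hccont θ)).add (hψ.continuous.comp (hcscont θ))).sub
      continuous_const).sub continuous_const
  -- value of F1 at θ = 0
  have hF10 : ∀ φ, F1Aux ψ v w k h i 0 φ =
      ((‖v - w‖ / 2) * (fderiv ℝ ψ v h - fderiv ℝ ψ w h)) * Real.cos φ
      + ((‖v - w‖ / 2) * (fderiv ℝ ψ v i - fderiv ℝ ψ w i)) * Real.sin φ := by
    intro φ
    rw [F1Aux, hc0, hcs0, hsd0]
    simp [ppAux, smul_add, smul_smul, map_add, _root_.map_smul, map_neg, smul_eq_mul]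
    ring
  have hcf1 : Continuous fun φ => F1Aux ψ v w k h i 0 φ := by
    have : Continuous fun φ : ℝ =>
        ((‖v - w‖ / 2) * (fderiv ℝ ψ v h - fderiv ℝ ψ w h)) * Real.cos φ
        + ((‖v - w‖ / 2) * (fderiv ℝ ψ v i - fderiv ℝ ψ w i)) * Real.sin φ := by fun_prop
    exact this.congr fun φ => (hF10 φ).symm
  have h1 : (∫ φ in (0:ℝ)..(2*π), F1Aux ψ v w k h i 0 φ) = 0 := by
    rw [intervalIntegral.integral_congr (g := fun φ =>
      ((‖v - w‖ / 2) * (fderiv ℝ ψ v h - fderiv ℝ ψ w h)) * Real.cos φ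
      + ((‖v - w‖ / 2) * (fderiv ℝ ψ v i - fderiv ℝ ψ w i)) * Real.sin φ)
      (fun φ _ => hF10 φ)]
    exact trig1 _ _
  -- value of F2 at θ = 0
  have hF20 : ∀ φ, F2Aux ψ v w k h i 0 φ =
      ((‖v - w‖ / 2)^2 * ((fderiv ℝ (fderiv ℝ ψ) v h) h + (fderiv ℝ (fderiv ℝ ψ) w h) h))
        * Real.cos φ ^ 2
      + ((‖v - w‖ / 2)^2 * ((fderiv ℝ (fderiv ℝ ψ) v h) i + (fderiv ℝ (fderiv ℝ ψ) v i) h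
          + (fderiv ℝ (fderiv ℝ ψ) w h) i + (fderiv ℝ (fderiv ℝ ψ) w i) h))
        * (Real.sin φ * Real.cos φ)
      + ((‖v - w‖ / 2)^2 * ((fderiv ℝ (fderiv ℝ ψ) v i) i + (fderiv ℝ (fderiv ℝ ψ) w i) i))
        * Real.sin φ ^ 2
      + ((‖v - w‖ / 2) * (fderiv ℝ ψ w k - fderiv ℝ ψ v k)) := by
    intro φ
    rw [F2Aux, hc0, hcs0, hsd0, hσ0]
    simp [ppAux, smul_add, smul_smul, map_add, _root_.map_smul, map_neg, smul_eq_mul,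
      ContinuousLinearMap.add_apply, ContinuousLinearMap.smul_apply, ContinuousLinearMap.neg_apply]
    ring
  have hIF2 : (∫ φ in (0:ℝ)..(2*π), F2Aux ψ v w k h i 0 φ) =
      (((‖v - w‖ / 2)^2 * ((fderiv ℝ (fderiv ℝ ψ) v h) h + (fderiv ℝ (fderiv ℝ ψ) w h) h))
        + ((‖v - w‖ / 2)^2 * ((fderiv ℝ (fderiv ℝ ψ) v i) i + (fderiv ℝ (fderiv ℝ ψ) w i) i))) * π
      + ((‖v - w‖ / 2) * (fderiv ℝ ψ w k - fderiv ℝ ψ v k)) * (2 * π) := by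
    rw [intervalIntegral.integral_congr (fun φ _ => hF20 φ)]
    exact trig2 _ _ _ _
  -- apply the key limit lemma
  have hKEY := key_limit (FAux ψ v w k h i) (F1Aux ψ v w k h i) (F2Aux ψ v w k h i)
    (fun θ φ => hasDerivAt_F ψ v w k h i θ φ hψ)
    (fun θ φ => hasDerivAt_F1 ψ v w k h i θ φ hψ)
    ((M2 * ρ * ρ + M1 * ρ) + (M2 * ρ * ρ + M1 * ρ)) hC hcf hcf1 h1
  have hcomp : Tendsto (fun ε : ℝ => ε * χ / π) (𝓝[>] (0:ℝ)) (𝓝[>] (0:ℝ)) := by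
    rw [tendsto_nhdsWithin_iff]
    constructor
    · have h0 : Tendsto (fun ε : ℝ => ε * χ / π) (𝓝 (0:ℝ)) (𝓝 ((0:ℝ) * χ / π)) :=
        ((continuous_id.mul continuous_const).div_const π).tendsto (0:ℝ)
      simpa using h0.mono_left nhdsWithin_le_nhds
    · filter_upwards [self_mem_nhdsWithin] with ε hε
      exact Set.mem_Ioi.mpr (div_pos (mul_pos (Set.mem_Ioi.mp hε) hχ0) hπ)
  have htend := (hKEY.comp hcomp).const_mul (((π:ℝ)^2)⁻¹)
  -- identify the function
  have hfun : ∀ᶠ ε in 𝓝[>] (0:ℝ),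
      (((π:ℝ)^2)⁻¹ * ((((ε * χ / π)^2)⁻¹ *
        ∫ φ in (0:ℝ)..(2*π), (FAux ψ v w k h i (ε * χ / π) φ - FAux ψ v w k h i 0 φ)))) =
      (ε ^ 2 * χ ^ 2)⁻¹ * ∫ φ in (0:ℝ)..(2 * π),
          (ψ (vPost v w (sigmaDir k h i (ε * χ / π) φ))
            + ψ (vPostStar v w (sigmaDir k h i (ε * χ / π) φ)) - ψ v - ψ w) := by
    filter_upwards [self_mem_nhdsWithin] with ε hε
    have hε0 : (0:ℝ) < ε := Set.mem_Ioi.mp hε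
    have hint : (∫ φ in (0:ℝ)..(2*π), (FAux ψ v w k h i (ε * χ / π) φ - FAux ψ v w k h i 0 φ))
        = ∫ φ in (0:ℝ)..(2 * π),
          (ψ (vPost v w (sigmaDir k h i (ε * χ / π) φ))
            + ψ (vPostStar v w (sigmaDir k h i (ε * χ / π) φ)) - ψ v - ψ w) := by
      refine intervalIntegral.integral_congr fun φ _ => ?_
      rw [hF0, sub_zero, FAux]
    rw [hint]
    have : (((π:ℝ)^2)⁻¹ * (((ε * χ / π)^2)⁻¹)) = (ε ^ 2 * χ ^ 2)⁻¹ := by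
      field_simp
    rw [← mul_assoc, this]
  -- identify the limit value
  have hval : (1 / (8 * π)) *
        (‖v - w‖ ^ 2 *
            (LinearMap.trace ℝ E3
                ((fderiv ℝ (gradient ψ) v + fderiv ℝ (gradient ψ) w : E3 →L[ℝ] E3) :
                  E3 →ₗ[ℝ] E3)
              - (‖v - w‖ ^ 2)⁻¹ *
                  ⟪v - w, (fderiv ℝ (gradient ψ) v + fderiv ℝ (gradient ψ) w) (v - w)⟫)
          - 4 * ⟪v - w, gradient ψ v - gradient ψ w⟫) =
      ((π:ℝ)^2)⁻¹ * ((∫ φ in (0:ℝ)..(2*π), F2Aux ψ v w k h i 0 φ) / 2) := by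
    rw [hIF2]
    have hkk : ⟪k, k⟫ = 1 := by
      rw [real_inner_self_eq_norm_sq, hknorm]; norm_num
    have hhh' : ⟪h, h⟫ = 1 := by
      rw [real_inner_self_eq_norm_sq, hh]; norm_num
    have hii' : ⟪i, i⟫ = 1 := by
      rw [real_inner_self_eq_norm_sq, hi]; norm_num
    have hhk : ⟪h, k⟫ = 0 := by rw [real_inner_comm]; exact hkh
    have hik : ⟪i, k⟫ = 0 := by rw [real_inner_comm]; exact hki
    have hih : ⟪i, h⟫ = 0 := by rw [real_inner_comm]; exact hhi
    have horth : Orthonormal ℝ ![k, h, i] := by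
      rw [orthonormal_iff_ite]
      intro a b
      fin_cases a <;> fin_cases b <;>
        simp [hkk, hhh', hii', hkh, hki, hhi, hhk, hik, hih, hknorm, hh, hi]
    have htr := trace_orthonormal (fderiv ℝ (gradient ψ) v + fderiv ℝ (gradient ψ) w) k h i horth
    have hx : ∀ (x y : E3), ⟪x, (fderiv ℝ (gradient ψ) v + fderiv ℝ (gradient ψ) w) y⟫
        = (fderiv ℝ (fderiv ℝ ψ) v y) x + (fderiv ℝ (fderiv ℝ ψ) w y) x := by
      intro x y
      rw [ContinuousLinearMap.add_apply, inner_add_right,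
        inner_fderiv_gradient, inner_fderiv_gradient]
    have huk : v - w = ‖v - w‖ • k := by
      rw [hk, smul_smul, mul_inv_cancel₀ hR.ne', one_smul]
    have hAu : ⟪v - w, (fderiv ℝ (gradient ψ) v + fderiv ℝ (gradient ψ) w) (v - w)⟫
        = ‖v - w‖^2 * ((fderiv ℝ (fderiv ℝ ψ) v k) k + (fderiv ℝ (fderiv ℝ ψ) w k) k) := by
      rw [hx]
      have e1 : (fderiv ℝ (fderiv ℝ ψ) v (v - w)) (v - w)
          = ‖v - w‖^2 * (fderiv ℝ (fderiv ℝ ψ) v k) k := by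
        conv_lhs => rw [huk]
        simp only [ContinuousLinearMap.map_smul, ContinuousLinearMap.smul_apply, smul_eq_mul]
        ring
      have e2 : (fderiv ℝ (fderiv ℝ ψ) w (v - w)) (v - w)
          = ‖v - w‖^2 * (fderiv ℝ (fderiv ℝ ψ) w k) k := by
        conv_lhs => rw [huk]
        simp only [ContinuousLinearMap.map_smul, ContinuousLinearMap.smul_apply, smul_eq_mul]
        ring
      rw [e1, e2]
      ring
    have hgu : ⟪v - w, gradient ψ v - gradient ψ w⟫
        = ‖v - w‖ * (fderiv ℝ ψ v k - fderiv ℝ ψ w k) := by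
      rw [inner_sub_right, inner_gradient, inner_gradient]
      conv_lhs => rw [huk]
      simp only [ContinuousLinearMap.map_smul, smul_eq_mul]
      ring
    rw [htr, hAu, hgu, hx k k, hx h h, hx i i]
    have hR2 : (‖v - w‖:ℝ) ≠ 0 := hR.ne'
    field_simp
    ring
  rw [hval]
  exact htend.congr' hfun
end
end

section
/- Let V ∈ L²(ℝ³ × ℝ³; ℝ³) satisfy V(v, v∗) = −V(v∗, v) for almost every (v, v∗). Then for every η > 0 there exists W ∈ C_c^∞(ℝ³ × ℝ³; ℝ³) such that W(v, v∗) = −W(v∗, v) for all (v, v∗), there exists δ > 0 with W(v, v∗) = 0 whenever |v − v∗| ≤ δ, and ‖V − W‖_{L²(ℝ⁶)} < η. -/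
noncomputable section
open MeasureTheory
open scoped ENNReal

namespace AntisymDenseAux

open Metric Set Function Filter
open scoped Convolution Topology Pointwise

instance haarProd : Measure.IsAddHaarMeasure (volume : Measure (E3 × E3)) := by
  rw [Measure.volume_eq_prod]; exact Measure.prod.instIsAddHaarMeasure _ _

instance regProd : (volume : Measure (E3 × E3)).Regular :=
  Measure.Regular.of_sigmaCompactSpace_of_isLocallyFiniteMeasure _

lemma swap_mp : MeasurePreserving (Prod.swap : E3 × E3 → E3 × E3) volume volume := by
  rw [Measure.volume_eq_prod]; exact Measure.measurePreserving_swap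

/-- L² bound through an indicator function. -/
lemma eLpNorm_le_of_bound_of_support {f : E3 × E3 → E3} {s : Set (E3 × E3)}
    (hs : MeasurableSet s) {C : ℝ}
    (hbound : ∀ q, ‖f q‖ ≤ C) (hsupp : ∀ q ∉ s, f q = 0) :
    eLpNorm f 2 volume ≤ (‖C‖₊ : ℝ≥0∞) * volume s ^ (1 / (2:ℝ)) := by
  have hC : 0 ≤ C := le_trans (norm_nonneg _) (hbound (0, 0))
  have h : ∀ q, ‖f q‖ ≤ s.indicator (fun _ => C) q := by
    intro q
    by_cases hq : q ∈ s
    · simpa [hq] using hbound q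
    · simp [hq, hsupp q hq]
  calc eLpNorm f 2 volume ≤ eLpNorm (s.indicator fun _ => C) 2 volume :=
        eLpNorm_mono_real h
    _ = (‖C‖₊ : ℝ≥0∞) * volume s ^ (1 / (2:ℝ≥0∞).toReal) :=
        eLpNorm_indicator_const hs two_ne_zero ENNReal.ofNat_ne_top
    _ = (‖C‖₊ : ℝ≥0∞) * volume s ^ (1 / (2:ℝ)) := by norm_num

/-- Smooth compactly supported approximation of continuous compactly supported functions
in `L²`. -/
lemma exists_smooth_approx (g : E3 × E3 → E3) (hg : Continuous g)
    (hcg : HasCompactSupport g) {ε : ℝ≥0∞} (hε : ε ≠ 0) :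
    ∃ W : E3 × E3 → E3, ContDiff ℝ (⊤ : ℕ∞) W ∧ HasCompactSupport W ∧
      eLpNorm (fun q => g q - W q) 2 volume ≤ ε := by
  classical
  set K : Set (E3 × E3) := Metric.closedBall (0 : E3 × E3) 1 + tsupport g with hK
  have hKcomp : IsCompact K := (isCompact_closedBall _ _).add hcg
  have hKfin : volume K < ∞ := hKcomp.measure_lt_top
  -- choose a small real ε₀
  set c : ℝ≥0∞ := volume K ^ (1 / (2:ℝ)) + 1 with hc
  have hc_ne_top : c ≠ ∞ := by
    have : volume K ^ (1 / (2:ℝ)) ≠ ∞ :=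
      ENNReal.rpow_ne_top_of_nonneg (by norm_num) hKfin.ne
    rw [hc]
    exact ENNReal.add_ne_top.mpr ⟨this, ENNReal.one_ne_top⟩
  have hc_ne_zero : c ≠ 0 := by simp [hc]
  set ε' : ℝ≥0∞ := min ε 1 with hε'
  have hε'_pos : 0 < ε' := lt_min (pos_iff_ne_zero.2 hε) one_pos
  have hε'_ne_top : ε' ≠ ∞ := ne_top_of_le_ne_top ENNReal.one_ne_top (min_le_right _ _)
  have hdivpos : 0 < ε' / c := ENNReal.div_pos hε'_pos.ne' hc_ne_top
  set ε₀ : ℝ := (min (ε' / c) 1).toReal with hε₀def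
  have hmin_ne_top : min (ε' / c) 1 ≠ ∞ := ne_top_of_le_ne_top ENNReal.one_ne_top (min_le_right _ _)
  have hε₀pos : 0 < ε₀ := ENNReal.toReal_pos (lt_min hdivpos one_pos).ne' hmin_ne_top
  have hε₀le : ENNReal.ofReal ε₀ ≤ ε' / c := by
    rw [hε₀def, ENNReal.ofReal_toReal hmin_ne_top]
    exact min_le_left _ _
  -- uniform continuity
  have hu : UniformContinuous g := hcg.uniformContinuous_of_continuous hg
  obtain ⟨r, hr, hur⟩ := Metric.uniformContinuous_iff.1 hu ε₀ hε₀pos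
  set R : ℝ := min r 1 with hR
  have hRpos : 0 < R := lt_min hr one_pos
  set φ : ContDiffBump (0 : E3 × E3) := ⟨R / 2, R, half_pos hRpos, half_lt_self hRpos⟩ with hφ
  set W : E3 × E3 → E3 := φ.normed volume ⋆[ContinuousLinearMap.lsmul ℝ ℝ, volume] g with hW
  have hgint : LocallyIntegrable g volume := hg.locallyIntegrable
  refine ⟨W, ?_, ?_, ?_⟩
  · exact φ.hasCompactSupport_normed.contDiff_convolution_left _ φ.contDiff_normed hgint
  · exact φ.hasCompactSupport_normed.convolution _ hcg
  · -- pointwise bound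
    have hdist : ∀ q, dist (W q) (g q) ≤ ε₀ := by
      intro q
      apply φ.dist_normed_convolution_le hg.aestronglyMeasurable
      intro x hx
      have h1 : dist x q < R := mem_ball.1 hx
      exact (hur (h1.trans_le (min_le_left _ _))).le
    have hts : tsupport g ⊆ K := by
      intro x hx
      have h0 : (0 : E3 × E3) ∈ Metric.closedBall (0 : E3 × E3) 1 :=
        Metric.mem_closedBall_self zero_le_one
      simpa using Set.add_mem_add h0 hx
    have hsupp : ∀ q ∉ K, g q - W q = 0 := by
      intro q hq
      have hgq : g q = 0 := by
        by_contra h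
        exact hq (hts (subset_tsupport g h))
      have hWq : W q = 0 := by
        by_contra h
        have hqm := support_convolution_subset
          (ContinuousLinearMap.lsmul ℝ ℝ) (f := φ.normed volume) (g := g) h
        rw [Set.mem_add] at hqm
        obtain ⟨a, ha, b, hb, hab⟩ := hqm
        refine hq ?_
        rw [hK, Set.mem_add]
        refine ⟨a, ?_, b, subset_tsupport g hb, hab⟩
        rw [φ.support_normed_eq] at ha
        have hR1 : R ≤ 1 := min_le_right _ _
        have : a ∈ Metric.ball (0 : E3 × E3) R := ha
        exact Metric.ball_subset_closedBall.trans
          (Metric.closedBall_subset_closedBall hR1) this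
      rw [hgq, hWq, sub_zero]
    have hbound : ∀ q, ‖g q - W q‖ ≤ ε₀ := by
      intro q
      rw [← dist_eq_norm, dist_comm]
      exact hdist q
    have := eLpNorm_le_of_bound_of_support (f := fun q => g q - W q)
      hKcomp.isClosed.measurableSet hbound hsupp
    refine this.trans ?_
    have h1 : (‖ε₀‖₊ : ℝ≥0∞) = ENNReal.ofReal ε₀ := by
      rw [← enorm_eq_nnnorm, ← ofReal_norm, Real.norm_of_nonneg hε₀pos.le]
    calc (‖ε₀‖₊ : ℝ≥0∞) * volume K ^ (1 / (2:ℝ))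
        = ENNReal.ofReal ε₀ * volume K ^ (1 / (2:ℝ)) := by rw [h1]
      _ ≤ (ε' / c) * c := by
          refine mul_le_mul' hε₀le ?_
          calc volume K ^ (1 / (2:ℝ)) ≤ volume K ^ (1 / (2:ℝ)) + 1 := le_self_add
            _ = c := rfl
      _ = ε' := ENNReal.div_mul_cancel hc_ne_zero hc_ne_top
      _ ≤ ε := min_le_left _ _

/-- The diagonal has measure zero. -/
lemma volume_diagonal_eq_zero :
    volume {q : E3 × E3 | q.1 = q.2} = 0 := by
  have : {q : E3 × E3 | q.1 = q.2} =
      (LinearMap.ker ((LinearMap.fst ℝ E3 E3) - (LinearMap.snd ℝ E3 E3)) : Set (E3 × E3)) := by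
    ext q
    simp [LinearMap.mem_ker, sub_eq_zero]
  rw [this]
  apply Measure.addHaar_submodule
  intro htop
  have h1 : ((EuclideanSpace.single 0 (1:ℝ) : E3), (0 : E3)) ∈
      LinearMap.ker ((LinearMap.fst ℝ E3 E3) - (LinearMap.snd ℝ E3 E3)) := by
    rw [htop]; trivial
  rw [LinearMap.mem_ker] at h1
  simp only [LinearMap.sub_apply, LinearMap.fst_apply, LinearMap.snd_apply, sub_zero] at h1
  have := congrArg (fun v : E3 => v 0) h1
  simp [EuclideanSpace.single_apply] at this

end AntisymDenseAux

open AntisymDenseAux Metric Set Function Filter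
open scoped Topology

set_option maxHeartbeats 2000000 in
/-- Density of `AS_c^∞` in `AS`: every `L²` vector field on `ℝ³ × ℝ³` which is
antisymmetric under the swap `(v,v∗) ↦ (v∗,v)` can be approximated in `L²` by smooth
compactly supported antisymmetric vector fields vanishing in a neighbourhood of the
diagonal. -/
theorem antisymmetric_smooth_fields_dense
    (V : E3 × E3 → E3) (hV : MemLp V 2 volume)
    (hanti : ∀ᵐ q : E3 × E3, V q = - V (q.2, q.1))
    (η : ℝ) (hη : 0 < η) :
    ∃ W : E3 × E3 → E3, ContDiff ℝ (⊤ : ℕ∞) W ∧ HasCompactSupport W ∧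
      (∀ v w : E3, W (v, w) = - W (w, v)) ∧
      (∃ δ > 0, ∀ v w : E3, ‖v - w‖ ≤ δ → W (v, w) = 0) ∧
      eLpNorm (fun q => V q - W q) 2 volume < ENNReal.ofReal η := by
  classical
  set ε : ℝ≥0∞ := ENNReal.ofReal (η / 4) with hεdef
  have hε0 : ε ≠ 0 := by
    rw [hεdef]
    exact (ENNReal.ofReal_pos.2 (by linarith)).ne'
  -- Step 1: continuous compactly supported approximation
  obtain ⟨g, g_supp, hg_sub, g_cont, g_mem⟩ :=
    hV.exists_hasCompactSupport_eLpNorm_sub_le ENNReal.ofNat_ne_top hε0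
  -- Step 2: smooth compactly supported approximation
  obtain ⟨W₀, W₀_smooth, W₀_supp, hW₀_sub⟩ := exists_smooth_approx g g_cont g_supp hε0
  have W₀_cont : Continuous W₀ := W₀_smooth.continuous
  -- triangle : ‖V - W₀‖ ≤ 2ε
  have hVW₀ : eLpNorm (fun q => V q - W₀ q) 2 volume ≤ ε + ε := by
    have h1 : (fun q => V q - W₀ q) = (fun q => (V - g) q + (g q - W₀ q)) := by
      funext q; simp [Pi.sub_apply]
    rw [h1]
    refine (eLpNorm_add_le (hV.aestronglyMeasurable.sub g_cont.aestronglyMeasurable)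
      (g_cont.aestronglyMeasurable.sub W₀_cont.aestronglyMeasurable) one_le_two).trans ?_
    exact add_le_add hg_sub hW₀_sub
  -- Step 3: antisymmetrisation
  set W₁ : E3 × E3 → E3 := fun q => (2⁻¹ : ℝ) • (W₀ q - W₀ (q.2, q.1)) with hW₁def
  have W₁_smooth : ContDiff ℝ (⊤ : ℕ∞) W₁ :=
    (W₀_smooth.sub (W₀_smooth.comp (contDiff_snd.prodMk contDiff_fst))).const_smul _
  have W₁_supp : HasCompactSupport W₁ := by
    have h2 : HasCompactSupport (fun q : E3 × E3 => W₀ (q.2, q.1)) :=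
      W₀_supp.comp_homeomorph (Homeomorph.prodComm E3 E3)
    have h3 : HasCompactSupport (fun q : E3 × E3 => W₀ q - W₀ (q.2, q.1)) := by
      simpa [sub_eq_add_neg, Function.comp_def, Pi.add_def] using W₀_supp.add (h2.comp_left (g := fun x : E3 => -x) neg_zero)
    exact h3.comp_left (g := fun x : E3 => (2⁻¹ : ℝ) • x) (smul_zero _)
  have W₁_cont : Continuous W₁ := W₁_smooth.continuous
  have W₁_anti : ∀ v w : E3, W₁ (v, w) = - W₁ (w, v) := by
    intro v w
    show (2⁻¹ : ℝ) • (W₀ (v, w) - W₀ (w, v)) = -((2⁻¹ : ℝ) • (W₀ (w, v) - W₀ (v, w)))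
    rw [← smul_neg, neg_sub]
  have hswapmp := swap_mp
  have hVW₁ : eLpNorm (fun q => V q - W₁ q) 2 volume ≤ ε + ε := by
    set U : E3 × E3 → E3 := fun q => V q - W₀ q with hUdef
    have hU : AEStronglyMeasurable U volume :=
      hV.aestronglyMeasurable.sub W₀_cont.aestronglyMeasurable
    have hUs : AEStronglyMeasurable (U ∘ Prod.swap) volume :=
      hU.comp_quasiMeasurePreserving hswapmp.quasiMeasurePreserving
    have hae : (fun q => V q - W₁ q)
        =ᵐ[volume] fun q => (2⁻¹ : ℝ) • (U q - U (Prod.swap q)) := by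
      filter_upwards [hanti] with q hq
      show V q - (2⁻¹ : ℝ) • (W₀ q - W₀ (q.2, q.1))
          = (2⁻¹ : ℝ) • ((V q - W₀ q) - (V (q.2, q.1) - W₀ (q.2, q.1)))
      rw [hq]
      module
    rw [eLpNorm_congr_ae hae]
    have hsmul : eLpNorm (fun q => (2⁻¹ : ℝ) • (U q - U (Prod.swap q))) 2 volume
        = (‖(2⁻¹ : ℝ)‖₊ : ℝ≥0∞) * eLpNorm (fun q => U q - U (Prod.swap q)) 2 volume := by
      rw [show (fun q => (2⁻¹ : ℝ) • (U q - U (Prod.swap q)))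
          = (2⁻¹ : ℝ) • (fun q => U q - U (Prod.swap q)) from rfl,
        eLpNorm_const_smul, enorm_eq_nnnorm]
    have hswapnorm : eLpNorm (U ∘ Prod.swap) 2 volume = eLpNorm U 2 volume :=
      eLpNorm_comp_measurePreserving hU hswapmp
    have htri : eLpNorm (fun q => U q - U (Prod.swap q)) 2 volume
        ≤ eLpNorm U 2 volume + eLpNorm (U ∘ Prod.swap) 2 volume :=
      eLpNorm_sub_le hU hUs one_le_two
    have hhalf : (‖(2⁻¹ : ℝ)‖₊ : ℝ≥0∞) = 2⁻¹ := by
      rw [← enorm_eq_nnnorm, ← ofReal_norm, Real.norm_of_nonneg (by norm_num)]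
      simp [ENNReal.ofReal_inv_of_pos]
    calc eLpNorm (fun q => (2⁻¹ : ℝ) • (U q - U (Prod.swap q))) 2 volume
        = (‖(2⁻¹ : ℝ)‖₊ : ℝ≥0∞) * eLpNorm (fun q => U q - U (Prod.swap q)) 2 volume := hsmul
      _ ≤ (2⁻¹ : ℝ≥0∞) * (eLpNorm U 2 volume + eLpNorm U 2 volume) := by
          rw [hhalf]
          exact mul_le_mul' le_rfl (htri.trans (by rw [hswapnorm]))
      _ = (2⁻¹ : ℝ≥0∞) * (2 * eLpNorm U 2 volume) := by rw [two_mul]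
      _ = eLpNorm U 2 volume := by
          rw [← mul_assoc, ENNReal.inv_mul_cancel two_ne_zero ENNReal.ofNat_ne_top, one_mul]
      _ ≤ ε + ε := hVW₀
  -- Step 4: cutting off near the diagonal
  obtain ⟨C, hC⟩ := W₁_cont.bounded_above_of_compact_support W₁_supp
  set K₁ : Set (E3 × E3) := tsupport W₁ with hK₁def
  have hK₁ : IsCompact K₁ := W₁_supp
  set s : ℕ → Set (E3 × E3) :=
    fun n => K₁ ∩ {q : E3 × E3 | ‖q.1 - q.2‖ ≤ 1 / ((n : ℝ) + 1)} with hsdef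
  have hclosed : ∀ n, IsClosed (s n) := fun n =>
    hK₁.isClosed.inter
      (isClosed_le (continuous_fst.sub continuous_snd).norm continuous_const)
  have hmeas : ∀ n, MeasurableSet (s n) := fun n => (hclosed n).measurableSet
  have hmono : Antitone s := by
    intro m n hmn q hq
    simp only [hsdef, Set.mem_inter_iff, Set.mem_setOf_eq] at hq ⊢
    refine ⟨hq.1, le_trans hq.2 ?_⟩
    apply one_div_le_one_div_of_le (by positivity)
    exact_mod_cast add_le_add_left (Nat.cast_le.2 hmn) 1
  have hiInter : (⋂ n, s n) ⊆ {q : E3 × E3 | q.1 = q.2} := by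
    intro q hq
    simp only [Set.mem_iInter] at hq
    have h0 : ‖q.1 - q.2‖ ≤ 0 :=
      ge_of_tendsto' tendsto_one_div_add_atTop_nhds_zero_nat (fun n => (hq n).2)
    have : q.1 - q.2 = 0 := norm_le_zero_iff.mp h0
    exact sub_eq_zero.mp this
  have hzero : volume (⋂ n, s n) = 0 :=
    measure_mono_null hiInter volume_diagonal_eq_zero
  have hfin : volume (s 0) ≠ ∞ :=
    ((measure_mono Set.inter_subset_left).trans_lt hK₁.measure_lt_top).ne
  have htend : Tendsto (volume ∘ s) atTop (𝓝 0) := by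
    have h2 := tendsto_measure_iInter_atTop (μ := volume)
      (fun n => (hmeas n).nullMeasurableSet) hmono ⟨0, hfin⟩
    rwa [hzero] at h2
  set c₁ : ℝ≥0∞ := (‖C‖₊ : ℝ≥0∞) + 1 with hc₁def
  have hc₁0 : c₁ ≠ 0 := by simp [hc₁def]
  have hc₁top : c₁ ≠ ∞ := by simp [hc₁def]
  set b : ℝ≥0∞ := (ε / c₁) ^ (2 : ℝ) with hbdef
  have hεtop : ε ≠ ∞ := ENNReal.ofReal_ne_top
  have hbpos : 0 < b :=
    ENNReal.rpow_pos (ENNReal.div_pos hε0 hc₁top) (ENNReal.div_lt_top hεtop hc₁0).ne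
  obtain ⟨n, hn⟩ : ∃ n, volume (s n) < b := (htend.eventually_lt_const hbpos).exists
  have hb12 : b ^ (1 / (2 : ℝ)) = ε / c₁ := by
    rw [hbdef, ← ENNReal.rpow_mul]
    norm_num
  -- the cutoff
  set δ : ℝ := 1 / (2 * ((n : ℝ) + 1)) with hδdef
  have hδpos : 0 < δ := by positivity
  set χ : E3 × E3 → ℝ :=
    fun q => Real.smoothTransition ((‖q.1 - q.2‖ ^ 2 - δ ^ 2) / δ ^ 2) with hχdef
  have hχ_smooth : ContDiff ℝ (⊤ : ℕ∞) χ := by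
    apply Real.smoothTransition.contDiff.comp
    apply ContDiff.div_const
    apply ContDiff.sub _ contDiff_const
    exact (contDiff_fst.sub contDiff_snd).norm_sq ℝ
  have hχ01 : ∀ q, 0 ≤ χ q ∧ χ q ≤ 1 := fun q =>
    ⟨Real.smoothTransition.nonneg _, Real.smoothTransition.le_one _⟩
  set W : E3 × E3 → E3 := fun q => χ q • W₁ q with hWdef
  have W_smooth : ContDiff ℝ (⊤ : ℕ∞) W := hχ_smooth.smul W₁_smooth
  have W_cont : Continuous W := W_smooth.continuous
  have W_supp : HasCompactSupport W := W₁_supp.smul_left (f := χ)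
  have W_anti : ∀ v w : E3, W (v, w) = - W (w, v) := by
    intro v w
    have hsym : χ (v, w) = χ (w, v) := by
      simp only [hχdef]
      rw [norm_sub_rev]
    show χ (v, w) • W₁ (v, w) = -(χ (w, v) • W₁ (w, v))
    rw [hsym, W₁_anti v w, smul_neg]
  have W_vanish : ∀ v w : E3, ‖v - w‖ ≤ δ → W (v, w) = 0 := by
    intro v w hvw
    have harg : (‖v - w‖ ^ 2 - δ ^ 2) / δ ^ 2 ≤ 0 := by
      apply div_nonpos_of_nonpos_of_nonneg _ (sq_nonneg δ)
      have := pow_le_pow_left₀ (norm_nonneg _) hvw 2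
      linarith
    show χ (v, w) • W₁ (v, w) = 0
    have : χ (v, w) = 0 := Real.smoothTransition.zero_of_nonpos harg
    rw [this]; exact zero_smul ℝ (W₁ (v, w))
  -- the error of the cutoff
  have hC0 : 0 ≤ C := le_trans (norm_nonneg _) (hC (0, 0))
  have hptbound : ∀ q, ‖W₁ q - W q‖ ≤ C := by
    intro q
    have h4 : W₁ q - W q = (1 - χ q) • W₁ q := by
      show W₁ q - χ q • W₁ q = (1 - χ q) • W₁ q
      rw [sub_smul, one_smul]
    rw [h4, norm_smul, Real.norm_eq_abs]
    have h5 : |1 - χ q| ≤ 1 := by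
      rw [abs_le]
      constructor
      · linarith [(hχ01 q).2]
      · linarith [(hχ01 q).1]
    calc |1 - χ q| * ‖W₁ q‖ ≤ 1 * C :=
          mul_le_mul h5 (hC q) (norm_nonneg _) zero_le_one
      _ = C := one_mul C
  have hptsupp : ∀ q ∉ s n, W₁ q - W q = 0 := by
    intro q hq
    by_cases hq1 : W₁ q = 0
    · show W₁ q - χ q • W₁ q = 0
      rw [hq1, smul_zero, sub_zero]
    · have hqK : q ∈ K₁ := subset_tsupport W₁ hq1
      have hqfar : ¬ ‖q.1 - q.2‖ ≤ 1 / ((n : ℝ) + 1) := by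
        intro h
        exact hq ⟨hqK, h⟩
      push_neg at hqfar
      have hq2δ : 2 * δ < ‖q.1 - q.2‖ := by
        rw [hδdef]
        rw [hδdef] at hδpos
        calc 2 * (1 / (2 * ((n : ℝ) + 1))) = 1 / ((n : ℝ) + 1) := by
              field_simp
          _ < ‖q.1 - q.2‖ := hqfar
      have harg : 1 ≤ (‖q.1 - q.2‖ ^ 2 - δ ^ 2) / δ ^ 2 := by
        rw [le_div_iff₀ (by positivity)]
        nlinarith [norm_nonneg (q.1 - q.2)]
      have hχ1 : χ q = 1 := Real.smoothTransition.one_of_one_le harg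
      show W₁ q - χ q • W₁ q = 0
      rw [hχ1, one_smul, sub_self]
  have herr : eLpNorm (fun q => W₁ q - W q) 2 volume ≤ ε := by
    refine (eLpNorm_le_of_bound_of_support (hmeas n) hptbound hptsupp).trans ?_
    calc (‖C‖₊ : ℝ≥0∞) * volume (s n) ^ (1 / (2 : ℝ))
        ≤ c₁ * (b ^ (1 / (2 : ℝ))) := by
          refine mul_le_mul' le_self_add (ENNReal.rpow_le_rpow hn.le (by norm_num))
      _ = c₁ * (ε / c₁) := by rw [hb12]
      _ = ε := ENNReal.mul_div_cancel hc₁0 hc₁top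
  -- conclusion
  refine ⟨W, W_smooth, W_supp, W_anti, ⟨δ, hδpos, W_vanish⟩, ?_⟩
  have h6 : (fun q => V q - W q) = fun q => (V q - W₁ q) + (W₁ q - W q) := by
    funext q
    exact (sub_add_sub_cancel (V q) (W₁ q) (W q)).symm
  rw [h6]
  calc eLpNorm (fun q => (V q - W₁ q) + (W₁ q - W q)) 2 volume
      ≤ eLpNorm (fun q => V q - W₁ q) 2 volume
        + eLpNorm (fun q => W₁ q - W q) 2 volume :=
        eLpNorm_add_le (hV.aestronglyMeasurable.sub W₁_cont.aestronglyMeasurable)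
          ((W₁_cont.sub W_cont).aestronglyMeasurable) one_le_two
    _ ≤ (ε + ε) + ε := add_le_add hVW₁ herr
    _ = ENNReal.ofReal (η / 4 + η / 4 + η / 4) := by
        rw [hεdef, ← ENNReal.ofReal_add (by linarith) (by linarith),
          ← ENNReal.ofReal_add (by linarith) (by linarith)]
    _ < ENNReal.ofReal η := (ENNReal.ofReal_lt_ofReal_iff hη).2 (by linarith)
end
end

section
/- Let ε ∈ (0, 1], let β^ε : (0, ε/2] → [0, ∞) be measurable with ∫₀^{ε/2} θ² β^ε(θ) dθ < ∞, and let γ ∈ [−4, 0); write |z|^γ_kin = 1 for |z| ≤ 1 and |z|^γ_kin = |z|^γ for |z| ≥ 1. Let f : ℝ³ → [0, ∞) be integrable with finite second moment and set F = √f. Fix R > 1 and χ_R ∈ C_c^∞(ℝ³) with 0 ≤ χ_R ≤ 1, χ_R ≡ 1 on B_R, supp χ_R ⊂ B_{R+1}, Lipschitz constant at most 2. Set C₂ = 150π · ( ∫∫_{ℝ⁶} (|v|² + |v∗|²) f(v) f(v∗) dv dv∗ ) · ( ∫₀^{ε/2} θ² β^ε(θ) dθ ). Then ∫∫_{ℝ⁶}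 ∫₀^{ε/2} β^ε(θ) ∫₀^{2π} |v−v∗|^γ_kin f(v∗) (F(v′) − F(v))² dφ dθ dv∗ dv + C₂ ≥ ((2√2(R+1))^γ / 2) ∫∫_{ℝ⁶} ∫₀^{ε/2} β^ε(θ) ∫₀^{2π} f(v∗) χ_R(v∗) (F(v′)χ_R(v′) − F(v)χ_R(v))² dφ dθ dv∗ dv. -/
noncomputable section
open Real MeasureTheory Filter Topology
open scoped RealInnerProductSpace

/-- Unit vector `k = (v − v∗)/|v − v∗|`. -/
def unitK (v w : E3) : E3 := ‖v - w‖⁻¹ • (v - w)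

/-- Orthogonal projection `Π[z]u = u − ⟨z,u⟩z/|z|²` onto the plane orthogonal to `z`. -/
def projPerp (z u : E3) : E3 := u - ((‖z‖ ^ 2)⁻¹ * ⟪z, u⟫) • z

/-- `(div_v − div_{v∗}) F` for a vector field `F : ℝ³ × ℝ³ → ℝ³`. -/
def divDiff (F : E3 × E3 → E3) (v w : E3) : ℝ :=
  LinearMap.trace ℝ E3 ((fderiv ℝ (fun z => F (z, w)) v : E3 →L[ℝ] E3) : E3 →ₗ[ℝ] E3)
    - LinearMap.trace ℝ E3 ((fderiv ℝ (fun z => F (v, z)) w : E3 →L[ℝ] E3) : E3 →ₗ[ℝ] E3)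

/-- `(∇_v − ∇_{v∗})ψ` for a scalar function `ψ : ℝ³ × ℝ³ → ℝ`. -/
def gradDiff (ψ : E3 × E3 → ℝ) (q : E3 × E3) : E3 :=
  gradient (fun z => ψ (z, q.2)) q.1 - gradient (fun z => ψ (q.1, z)) q.2

/-- Discrete gradient `∇̄ψ(v,v∗,σ) = ψ(v',v∗') + ψ(v∗',v') − ψ(v,v∗) − ψ(v∗,v)` for a
function of two velocities. -/
def barGrad2 (ψ : E3 × E3 → ℝ) (v w σ : E3) : ℝ :=
  ψ (vPost v w σ, vPostStar v w σ) + ψ (vPostStar v w σ, vPost v w σ) - ψ (v, w) - ψ (w, v)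

open scoped ENNReal

/-- Kinetic cutoff `|z|^γ_kin`: equal to `1` for `|z| ≤ 1` and to `|z|^γ` for `|z| ≥ 1`. -/
def kinCutoff (γ : ℝ) (z : E3) : ℝ := if ‖z‖ ≤ 1 then 1 else ‖z‖ ^ γ

section Aux

lemma kinCutoff_nonneg (γ : ℝ) (z : E3) : 0 ≤ kinCutoff γ z := by
  unfold kinCutoff
  split
  · norm_num
  · exact Real.rpow_nonneg (norm_nonneg _) γ

lemma sq_norm_smul (c : ℝ) (x : E3) : ‖c • x‖ ^ 2 = c ^ 2 * ‖x‖ ^ 2 := by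
  rw [norm_smul]; simp [mul_pow, sq_abs]

/-- Geometry of the collision: distances from `v'` to `v` and to `w`. -/
lemma geom_norms (v w : E3) (hvw : v ≠ w) (hh ii : E3) (θ φ : ℝ)
    (h1 : ‖hh‖ = 1) (h2 : ‖ii‖ = 1) (h3 : ⟪unitK v w, hh⟫ = 0)
    (h4 : ⟪unitK v w, ii⟫ = 0) (h5 : ⟪hh, ii⟫ = 0) :
    ‖vPost v w (sigmaDir (unitK v w) hh ii θ φ) - v‖ ^ 2
        = ‖v - w‖ ^ 2 / 2 * (1 - Real.cos θ) ∧
      ‖vPost v w (sigmaDir (unitK v w) hh ii θ φ) - w‖ ^ 2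
        = ‖v - w‖ ^ 2 / 2 * (1 + Real.cos θ) := by
  set r : ℝ := ‖v - w‖ with hrdef
  have hr0 : r ≠ 0 := by
    simp only [hrdef, ne_eq, norm_eq_zero, sub_eq_zero]
    exact hvw
  set k : E3 := unitK v w with hkdef
  have hknorm : ‖k‖ ^ 2 = 1 := by
    rw [hkdef]
    unfold unitK
    rw [sq_norm_smul, ← hrdef]
    field_simp
  set u : E3 := Real.cos φ • hh + Real.sin φ • ii with hudef
  have hku : ⟪k, u⟫ = 0 := by
    rw [hudef]
    rw [inner_add_right, real_inner_smul_right, real_inner_smul_right]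
    rw [hkdef] at *
    rw [h3, h4]; ring
  have hu2 : ‖u‖ ^ 2 = 1 := by
    rw [hudef, norm_add_sq_real, sq_norm_smul, sq_norm_smul,
      real_inner_smul_left, real_inner_smul_right, h5, h1, h2]
    ring_nf
    nlinarith [Real.sin_sq_add_cos_sq φ]
  set σ : E3 := sigmaDir k hh ii θ φ with hσdef
  have hσu : σ = Real.cos θ • k + Real.sin θ • u := by
    rw [hσdef, hudef]; rfl
  have hσ2 : ‖σ‖ ^ 2 = 1 := by
    rw [hσu, norm_add_sq_real, sq_norm_smul, sq_norm_smul,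
      real_inner_smul_left, real_inner_smul_right, hku, hknorm, hu2]
    ring_nf
    nlinarith [Real.sin_sq_add_cos_sq θ]
  have hvwk : v - w = r • k := by
    rw [hkdef]
    unfold unitK
    rw [smul_smul, ← hrdef, mul_inv_cancel₀ hr0, one_smul]
  have hinner : ⟪v - w, σ⟫ = r * Real.cos θ := by
    rw [hvwk, real_inner_smul_left, hσu, inner_add_right,
      real_inner_smul_right, real_inner_smul_right, real_inner_self_eq_norm_sq,
      hknorm, hku]
    ring
  have hpost1 : vPost v w σ - v = (r / 2) • σ - ((2:ℝ)⁻¹) • (v - w) := by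
    unfold vPost
    rw [← hrdef]
    module
  have hpost2 : vPost v w σ - w = ((2:ℝ)⁻¹) • (v - w) + (r / 2) • σ := by
    unfold vPost
    rw [← hrdef]
    module
  have hinner' : ⟪σ, v - w⟫ = r * Real.cos θ := by
    rw [real_inner_comm]; exact hinner
  constructor
  · rw [hpost1, norm_sub_sq_real, sq_norm_smul, sq_norm_smul,
      real_inner_smul_left, real_inner_smul_right, hinner', hσ2,
      ← hrdef]
    ring
  · rw [hpost2, norm_add_sq_real, sq_norm_smul, sq_norm_smul,
      real_inner_smul_left, real_inner_smul_right, hinner, hσ2, ← hrdef]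
    ring

/-- `1 - cos θ ≤ θ² / 2`. -/
lemma one_sub_cos_le_half_sq' (θ : ℝ) : 1 - Real.cos θ ≤ θ ^ 2 / 2 := by
  have h1 : Real.sin (θ / 2) ^ 2 = 1 / 2 - Real.cos (2 * (θ / 2)) / 2 :=
    Real.sin_sq_eq_half_sub (θ / 2)
  have h2 : Real.sin (θ / 2) ^ 2 ≤ (θ / 2) ^ 2 := Real.sin_sq_le_sq
  rw [show 2 * (θ / 2) = θ by ring] at h1
  nlinarith

lemma decomp_sq (a b c d : ℝ) : (a * b - c * d) ^ 2
    ≤ 2 * b ^ 2 * (a - c) ^ 2 + 2 * c ^ 2 * (b - d) ^ 2 := by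
  nlinarith [sq_nonneg (b * (a - c) - c * (b - d))]

set_option maxHeartbeats 1000000 in
/-- The key pointwise inequality. -/
lemma key_pointwise
    (γ R : ℝ) (hγn : γ < 0) (hR : 1 < R)
    (f : E3 → ℝ) (hf0 : ∀ v, 0 ≤ f v)
    (χ : E3 → ℝ) (hχ01 : ∀ v, χ v ∈ Set.Icc (0:ℝ) 1)
    (hχsupp : tsupport χ ⊆ Metric.ball (0 : E3) (R + 1))
    (hχlip : LipschitzWith 2 χ)
    (v w : E3) (θ φ b : ℝ) (hb : 0 ≤ b) (hθ : 0 < θ) (hθ2 : θ ≤ 1 / 2)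
    (hh ii : E3)
    (honb : v ≠ w → ‖hh‖ = 1 ∧ ‖ii‖ = 1 ∧ ⟪unitK v w, hh⟫ = 0 ∧
      ⟪unitK v w, ii⟫ = 0 ∧ ⟪hh, ii⟫ = 0) :
    ((2 * Real.sqrt 2 * (R + 1)) ^ γ / 2) *
        (b * f w * χ w *
          (Real.sqrt (f (vPost v w (sigmaDir (unitK v w) hh ii θ φ))) *
              χ (vPost v w (sigmaDir (unitK v w) hh ii θ φ))
            - Real.sqrt (f v) * χ v) ^ 2)
      ≤ b * kinCutoff γ (v - w) * f w *
          (Real.sqrt (f (vPost v w (sigmaDir (unitK v w) hh ii θ φ)))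
            - Real.sqrt (f v)) ^ 2
        + (θ ^ 2 * b) * (2 * f v * f w * (‖v‖ ^ 2 + ‖w‖ ^ 2)) := by
  set X : ℝ := 2 * Real.sqrt 2 * (R + 1) with hXdef
  have hsqrt2 : 1 ≤ Real.sqrt 2 := by
    rw [show (1:ℝ) = Real.sqrt 1 by simp]
    exact Real.sqrt_le_sqrt (by norm_num)
  have hX1 : 1 ≤ X := by nlinarith
  have hc0pos : 0 < X ^ γ := Real.rpow_pos_of_pos (by linarith) γ
  have hc01 : X ^ γ ≤ 1 := Real.rpow_le_one_of_one_le_of_nonpos hX1 hγn.le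
  have hkin0 : 0 ≤ kinCutoff γ (v - w) := kinCutoff_nonneg γ _
  by_cases hvw : v = w
  · subst hvw
    have hvv : vPost v v (sigmaDir (unitK v v) hh ii θ φ) = v := by
      unfold vPost
      rw [sub_self, norm_zero]
      module
    rw [hvv]
    have h1 : (Real.sqrt (f v) * χ v - Real.sqrt (f v) * χ v) ^ 2 = 0 := by ring
    have h2 : (Real.sqrt (f v) - Real.sqrt (f v)) ^ 2 = 0 := by ring
    rw [h1, h2]
    have hfv := hf0 v
    have : (0:ℝ) ≤ (θ ^ 2 * b) * (2 * f v * f v * (‖v‖ ^ 2 + ‖v‖ ^ 2)) := by positivity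
    nlinarith
  · obtain ⟨h1, h2, h3, h4, h5⟩ := honb hvw
    obtain ⟨eq1, eq2⟩ := geom_norms v w hvw hh ii θ φ h1 h2 h3 h4 h5
    set v' : E3 := vPost v w (sigmaDir (unitK v w) hh ii θ φ) with hv'def
    set r : ℝ := ‖v - w‖ with hrdef
    set F' : ℝ := Real.sqrt (f v') with hF'def
    set F : ℝ := Real.sqrt (f v) with hFdef
    have hcos0 : 0 ≤ Real.cos θ := by
      apply Real.cos_nonneg_of_mem_Icc
      constructor
      · linarith [Real.pi_gt_three]
      · linarith [Real.pi_gt_three]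
    have hcosub : 1 - Real.cos θ ≤ θ ^ 2 / 2 := one_sub_cos_le_half_sq' θ
    -- Lipschitz bound
    have hlip : |χ v' - χ v| ≤ 2 * ‖v' - v‖ := by
      have := hχlip.dist_le_mul v' v
      rw [Real.dist_eq, dist_eq_norm] at this
      simpa using this
    have hd1 : (χ v' - χ v) ^ 2 ≤ θ ^ 2 * r ^ 2 := by
      have h4' : (χ v' - χ v) ^ 2 ≤ 4 * ‖v' - v‖ ^ 2 := by
        nlinarith [abs_nonneg (χ v' - χ v), sq_abs (χ v' - χ v), norm_nonneg (v' - v)]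
      rw [eq1] at h4'
      nlinarith [sq_nonneg r]
    have hχw := hχ01 w
    have hχv := hχ01 v
    have hχv' := hχ01 v'
    -- Term 1
    have key1 : X ^ γ * (χ w * χ v' ^ 2) * (F' - F) ^ 2
        ≤ kinCutoff γ (v - w) * (F' - F) ^ 2 := by
      by_cases hz : χ w = 0 ∨ χ v' = 0
      · rcases hz with hz | hz <;>
          · rw [hz]
            simpa using mul_nonneg hkin0 (sq_nonneg (F' - F))
      · push_neg at hz
        obtain ⟨hzw, hzv'⟩ := hz
        have hwball : ‖w‖ < R + 1 := by
          have : w ∈ tsupport χ := subset_tsupport χ hzw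
          have := hχsupp this
          rwa [Metric.mem_ball, dist_zero_right] at this
        have hv'ball : ‖v'‖ < R + 1 := by
          have : v' ∈ tsupport χ := subset_tsupport χ hzv'
          have := hχsupp this
          rwa [Metric.mem_ball, dist_zero_right] at this
        have hv'w : ‖v' - w‖ < 2 * (R + 1) := by
          calc ‖v' - w‖ ≤ ‖v'‖ + ‖w‖ := norm_sub_le _ _
            _ < 2 * (R + 1) := by linarith
        have hr2 : r ^ 2 ≤ 2 * ‖v' - w‖ ^ 2 := by
          rw [eq2]; nlinarith [sq_nonneg r]
        have hX2 : X ^ 2 = 8 * (R + 1) ^ 2 := by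
          rw [hXdef]
          have : Real.sqrt 2 ^ 2 = 2 := Real.sq_sqrt (by norm_num)
          nlinarith
        have hrX : r ≤ X := by
          have hrpos : (0:ℝ) ≤ r := norm_nonneg _
          have hXpos : (0:ℝ) ≤ X := by linarith
          nlinarith [norm_nonneg (v' - w)]
        have hkinX : X ^ γ ≤ kinCutoff γ (v - w) := by
          unfold kinCutoff
          rw [← hrdef]
          split
          · exact hc01
          · next hr1 =>
            push_neg at hr1
            exact Real.rpow_le_rpow_of_nonpos (by linarith) hrX hγn.le
        have hprod : X ^ γ * (χ w * χ v' ^ 2) ≤ kinCutoff γ (v - w) := by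
          have h01 : χ w * χ v' ^ 2 ≤ 1 := by nlinarith [hχw.1, hχw.2, hχv'.1, hχv'.2]
          have h00 : 0 ≤ χ w * χ v' ^ 2 := mul_nonneg hχw.1 (sq_nonneg _)
          nlinarith
        exact mul_le_mul_of_nonneg_right hprod (sq_nonneg _)
    -- Term 2
    have key2 : X ^ γ * χ w * F ^ 2 * (χ v' - χ v) ^ 2
        ≤ θ ^ 2 * (2 * f v * (‖v‖ ^ 2 + ‖w‖ ^ 2)) := by
      have hF2 : F ^ 2 = f v := Real.sq_sqrt (hf0 v)
      have hrvw : r ^ 2 ≤ 2 * (‖v‖ ^ 2 + ‖w‖ ^ 2) := by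
        have h6 := norm_sub_le v w
        rw [← hrdef] at h6
        have h7 : (0:ℝ) ≤ r := hrdef ▸ norm_nonneg _
        nlinarith [sq_nonneg (‖v‖ - ‖w‖), norm_nonneg v, norm_nonneg w]
      have h1' : X ^ γ * χ w ≤ 1 := by
        calc X ^ γ * χ w ≤ 1 * 1 := mul_le_mul hc01 hχw.2 hχw.1 zero_le_one
          _ = 1 := mul_one 1
      have h0' : 0 ≤ X ^ γ * χ w := mul_nonneg hc0pos.le hχw.1
      calc X ^ γ * χ w * F ^ 2 * (χ v' - χ v) ^ 2
          = (X ^ γ * χ w) * (f v * (χ v' - χ v) ^ 2) := by rw [hF2]; ring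
        _ ≤ 1 * (f v * (θ ^ 2 * r ^ 2)) := by
            apply mul_le_mul h1' (mul_le_mul_of_nonneg_left hd1 (hf0 v))
              (mul_nonneg (hf0 v) (sq_nonneg _)) zero_le_one
        _ = (θ ^ 2 * f v) * r ^ 2 := by ring
        _ ≤ (θ ^ 2 * f v) * (2 * (‖v‖ ^ 2 + ‖w‖ ^ 2)) :=
            mul_le_mul_of_nonneg_left hrvw (mul_nonneg (sq_nonneg θ) (hf0 v))
        _ = θ ^ 2 * (2 * f v * (‖v‖ ^ 2 + ‖w‖ ^ 2)) := by ring
    -- assemble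
    have decomp : (F' * χ v' - F * χ v) ^ 2
        ≤ 2 * χ v' ^ 2 * (F' - F) ^ 2 + 2 * F ^ 2 * (χ v' - χ v) ^ 2 :=
      decomp_sq F' (χ v') F (χ v)
    have step : (X ^ γ / 2) * (χ w * (F' * χ v' - F * χ v) ^ 2)
        ≤ kinCutoff γ (v - w) * (F' - F) ^ 2
          + θ ^ 2 * (2 * f v * (‖v‖ ^ 2 + ‖w‖ ^ 2)) := by
      have e1 : (X ^ γ / 2) * (χ w * (F' * χ v' - F * χ v) ^ 2)
          ≤ (X ^ γ / 2) * (χ w * (2 * χ v' ^ 2 * (F' - F) ^ 2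
              + 2 * F ^ 2 * (χ v' - χ v) ^ 2)) := by
        apply mul_le_mul_of_nonneg_left _ (by positivity)
        exact mul_le_mul_of_nonneg_left decomp hχw.1
      refine e1.trans ?_
      have e2 : (X ^ γ / 2) * (χ w * (2 * χ v' ^ 2 * (F' - F) ^ 2
            + 2 * F ^ 2 * (χ v' - χ v) ^ 2))
          = X ^ γ * (χ w * χ v' ^ 2) * (F' - F) ^ 2
            + X ^ γ * χ w * F ^ 2 * (χ v' - χ v) ^ 2 := by ring
      rw [e2]
      exact add_le_add key1 key2
    have hbfw : 0 ≤ b * f w := mul_nonneg hb (hf0 w)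
    calc (X ^ γ / 2) * (b * f w * χ w * (F' * χ v' - F * χ v) ^ 2)
        = (b * f w) * ((X ^ γ / 2) * (χ w * (F' * χ v' - F * χ v) ^ 2)) := by ring
      _ ≤ (b * f w) * (kinCutoff γ (v - w) * (F' - F) ^ 2
            + θ ^ 2 * (2 * f v * (‖v‖ ^ 2 + ‖w‖ ^ 2))) :=
          mul_le_mul_of_nonneg_left step hbfw
      _ = b * kinCutoff γ (v - w) * f w * (F' - F) ^ 2
            + (θ ^ 2 * b) * (2 * f v * f w * (‖v‖ ^ 2 + ‖w‖ ^ 2)) := by ring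



set_option maxHeartbeats 1000000 in
/-- Truncation lemma: the dissipation-type quantity with kernel `β^ε` and kinetic cutoff
controls its smoothly truncated version, up to the explicit additive constant
`C₂ = 150π (∫∫ (|v|²+|v∗|²) f f∗)(∫ θ² β^ε)` and the multiplicative constant
`(2√2(R+1))^γ / 2`. -/
theorem truncation_lemma
    (ε : ℝ) (hε : ε ∈ Set.Ioc (0:ℝ) 1)
    (βε : ℝ → ℝ) (hβm : Measurable βε)
    (hβ0 : ∀ θ ∈ Set.Ioc (0:ℝ) (ε / 2), 0 ≤ βε θ)
    (hβint : IntegrableOn (fun θ : ℝ => θ ^ 2 * βε θ) (Set.Ioc (0:ℝ) (ε / 2)))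
    (γ : ℝ) (hγ : γ ∈ Set.Ico (-4 : ℝ) 0)
    (f : E3 → ℝ) (hfm : Measurable f) (hf0 : ∀ v, 0 ≤ f v) (hfi : Integrable f)
    (hmom : Integrable (fun v : E3 => ‖v‖ ^ 2 * f v))
    (R : ℝ) (hR : 1 < R)
    (χR : E3 → ℝ) (hχs : ContDiff ℝ (⊤ : ℕ∞) χR) (hχc : HasCompactSupport χR)
    (hχ01 : ∀ v, χR v ∈ Set.Icc (0:ℝ) 1)
    (hχ1 : ∀ v ∈ Metric.ball (0 : E3) R, χR v = 1)
    (hχsupp : tsupport χR ⊆ Metric.ball (0 : E3) (R + 1))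
    (hχlip : LipschitzWith 2 χR)
    (h i : E3 × E3 → E3) (hhm : Measurable h) (him : Measurable i)
    (honb : ∀ v w : E3, v ≠ w →
      ‖h (v, w)‖ = 1 ∧ ‖i (v, w)‖ = 1 ∧
        ⟪unitK v w, h (v, w)⟫ = 0 ∧ ⟪unitK v w, i (v, w)⟫ = 0 ∧
        ⟪h (v, w), i (v, w)⟫ = 0) :
    ENNReal.ofReal (((2 * Real.sqrt 2 * (R + 1)) ^ γ) / 2) *
        ∫⁻ q : E3 × E3, ∫⁻ θ in Set.Ioc (0:ℝ) (ε / 2), ∫⁻ φ in Set.Ioc (0:ℝ) (2 * π),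
          ENNReal.ofReal (βε θ * f q.2 * χR q.2 *
            (Real.sqrt (f (vPost q.1 q.2 (sigmaDir (unitK q.1 q.2) (h q) (i q) θ φ))) *
                χR (vPost q.1 q.2 (sigmaDir (unitK q.1 q.2) (h q) (i q) θ φ))
              - Real.sqrt (f q.1) * χR q.1) ^ 2)
      ≤ (∫⁻ q : E3 × E3, ∫⁻ θ in Set.Ioc (0:ℝ) (ε / 2), ∫⁻ φ in Set.Ioc (0:ℝ) (2 * π),
            ENNReal.ofReal (βε θ * kinCutoff γ (q.1 - q.2) * f q.2 *
              (Real.sqrt (f (vPost q.1 q.2 (sigmaDir (unitK q.1 q.2) (h q) (i q) θ φ)))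
                - Real.sqrt (f q.1)) ^ 2))
        + ENNReal.ofReal (150 * π *
            (∫ q : E3 × E3, (‖q.1‖ ^ 2 + ‖q.2‖ ^ 2) * (f q.1 * f q.2)) *
            (∫ θ in Set.Ioc (0:ℝ) (ε / 2), θ ^ 2 * βε θ)) := by
  obtain ⟨hε0, hε1⟩ := hε
  obtain ⟨hγ4, hγn⟩ := hγ
  set c : ℝ := (2 * Real.sqrt 2 * (R + 1)) ^ γ / 2 with hcdef
  have hc0 : 0 ≤ c := by
    have hs2 : (0:ℝ) < Real.sqrt 2 := Real.sqrt_pos.mpr (by norm_num)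
    have hX : (0:ℝ) < 2 * Real.sqrt 2 * (R + 1) := by nlinarith
    have := Real.rpow_pos_of_pos hX γ
    rw [hcdef]; linarith
  set Sθ : Set ℝ := Set.Ioc (0:ℝ) (ε / 2) with hSθ
  set Sφ : Set ℝ := Set.Ioc (0:ℝ) (2 * π) with hSφ
  set G : E3 × E3 → ℝ → ℝ → ℝ≥0∞ := fun q θ φ =>
    ENNReal.ofReal (βε θ * f q.2 * χR q.2 *
      (Real.sqrt (f (vPost q.1 q.2 (sigmaDir (unitK q.1 q.2) (h q) (i q) θ φ))) *
          χR (vPost q.1 q.2 (sigmaDir (unitK q.1 q.2) (h q) (i q) θ φ))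
        - Real.sqrt (f q.1) * χR q.1) ^ 2) with hGdef
  set H : E3 × E3 → ℝ → ℝ → ℝ≥0∞ := fun q θ φ =>
    ENNReal.ofReal (βε θ * kinCutoff γ (q.1 - q.2) * f q.2 *
      (Real.sqrt (f (vPost q.1 q.2 (sigmaDir (unitK q.1 q.2) (h q) (i q) θ φ)))
        - Real.sqrt (f q.1)) ^ 2) with hHdef
  set n : E3 × E3 → ℝ := fun q => ‖q.1‖ ^ 2 + ‖q.2‖ ^ 2 with hndef
  set M : ℝ := ∫ q : E3 × E3, (‖q.1‖ ^ 2 + ‖q.2‖ ^ 2) * (f q.1 * f q.2) with hMdef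
  set Bint : ℝ := ∫ θ in Sθ, θ ^ 2 * βε θ with hBdef
  have hnnn : ∀ q : E3 × E3, 0 ≤ n q := fun q => by
    rw [hndef]; positivity
  have hg0 : ∀ q : E3 × E3, 0 ≤ 2 * f q.1 * f q.2 * n q := fun q =>
    mul_nonneg (mul_nonneg (mul_nonneg (by norm_num) (hf0 q.1)) (hf0 q.2)) (hnnn q)
  have hLβ : (∫⁻ θ in Sθ, ENNReal.ofReal (θ ^ 2 * βε θ)) = ENNReal.ofReal Bint := by
    rw [hBdef]
    exact (ofReal_integral_eq_lintegral_ofReal hβint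
      (ae_restrict_of_forall_mem measurableSet_Ioc fun θ hθ =>
        mul_nonneg (sq_nonneg θ) (hβ0 θ hθ))).symm
  -- the per-point pointwise bound
  have hpoint : ∀ (q : E3 × E3), ∀ θ ∈ Sθ, ∀ φ : ℝ,
      ENNReal.ofReal c * G q θ φ
        ≤ H q θ φ + ENNReal.ofReal (θ ^ 2 * βε θ) *
            ENNReal.ofReal (2 * f q.1 * f q.2 * n q) := by
    intro q θ hθ φ
    obtain ⟨hθ0, hθε⟩ := hθ
    have hθhalf : θ ≤ 1 / 2 := by linarith
    have hb : 0 ≤ βε θ := hβ0 θ ⟨hθ0, hθε⟩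
    have hkey := key_pointwise γ R hγn hR f hf0 χR hχ01 hχsupp hχlip q.1 q.2 θ φ
      (βε θ) hb hθ0 hθhalf (h q) (i q)
      (fun hne => by simpa using honb q.1 q.2 hne)
    calc ENNReal.ofReal c * G q θ φ
        = ENNReal.ofReal (c * (βε θ * f q.2 * χR q.2 *
            (Real.sqrt (f (vPost q.1 q.2 (sigmaDir (unitK q.1 q.2) (h q) (i q) θ φ))) *
                χR (vPost q.1 q.2 (sigmaDir (unitK q.1 q.2) (h q) (i q) θ φ))
              - Real.sqrt (f q.1) * χR q.1) ^ 2)) := by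
          rw [hGdef, ENNReal.ofReal_mul hc0]
      _ ≤ ENNReal.ofReal ((βε θ * kinCutoff γ (q.1 - q.2) * f q.2 *
            (Real.sqrt (f (vPost q.1 q.2 (sigmaDir (unitK q.1 q.2) (h q) (i q) θ φ)))
              - Real.sqrt (f q.1)) ^ 2)
            + (θ ^ 2 * βε θ) * (2 * f q.1 * f q.2 * n q)) :=
          ENNReal.ofReal_le_ofReal hkey
      _ ≤ H q θ φ + ENNReal.ofReal ((θ ^ 2 * βε θ) * (2 * f q.1 * f q.2 * n q)) := by
          rw [hHdef]
          exact ENNReal.ofReal_add_le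
      _ = H q θ φ + ENNReal.ofReal (θ ^ 2 * βε θ) *
            ENNReal.ofReal (2 * f q.1 * f q.2 * n q) := by
          rw [ENNReal.ofReal_mul (mul_nonneg (sq_nonneg θ) hb)]
  -- the per-q bound
  have hperq : ∀ q : E3 × E3,
      ENNReal.ofReal c * ∫⁻ θ in Sθ, ∫⁻ φ in Sφ, G q θ φ
        ≤ (∫⁻ θ in Sθ, ∫⁻ φ in Sφ, H q θ φ)
          + ENNReal.ofReal (2 * f q.1 * f q.2 * n q)
              * (ENNReal.ofReal (2 * π) * ENNReal.ofReal Bint) := by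
    intro q
    rw [← lintegral_const_mul' _ _ ENNReal.ofReal_ne_top]
    have step1 : ∀ θ ∈ Sθ,
        ENNReal.ofReal c * ∫⁻ φ in Sφ, G q θ φ
          ≤ (∫⁻ φ in Sφ, H q θ φ)
            + ENNReal.ofReal (θ ^ 2 * βε θ) *
                (ENNReal.ofReal (2 * f q.1 * f q.2 * n q) * ENNReal.ofReal (2 * π)) := by
      intro θ hθ
      rw [← lintegral_const_mul' _ _ ENNReal.ofReal_ne_top]
      calc ∫⁻ φ in Sφ, ENNReal.ofReal c * G q θ φ
          ≤ ∫⁻ φ in Sφ, (H q θ φ + ENNReal.ofReal (θ ^ 2 * βε θ) *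
              ENNReal.ofReal (2 * f q.1 * f q.2 * n q)) :=
            lintegral_mono fun φ => hpoint q θ hθ φ
        _ = (∫⁻ φ in Sφ, H q θ φ) + ENNReal.ofReal (θ ^ 2 * βε θ) *
              ENNReal.ofReal (2 * f q.1 * f q.2 * n q) * volume Sφ := by
            rw [lintegral_add_right _ measurable_const, setLIntegral_const]
        _ = (∫⁻ φ in Sφ, H q θ φ) + ENNReal.ofReal (θ ^ 2 * βε θ) *
              (ENNReal.ofReal (2 * f q.1 * f q.2 * n q) * ENNReal.ofReal (2 * π)) := by
            rw [hSφ, Real.volume_Ioc, sub_zero, mul_assoc]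
    calc ∫⁻ θ in Sθ, ENNReal.ofReal c * ∫⁻ φ in Sφ, G q θ φ
        ≤ ∫⁻ θ in Sθ, ((∫⁻ φ in Sφ, H q θ φ)
            + ENNReal.ofReal (θ ^ 2 * βε θ) *
                (ENNReal.ofReal (2 * f q.1 * f q.2 * n q) * ENNReal.ofReal (2 * π))) :=
          lintegral_mono_ae (ae_restrict_of_forall_mem measurableSet_Ioc step1)
      _ = (∫⁻ θ in Sθ, ∫⁻ φ in Sφ, H q θ φ)
          + ∫⁻ θ in Sθ, ENNReal.ofReal (θ ^ 2 * βε θ) *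
              (ENNReal.ofReal (2 * f q.1 * f q.2 * n q) * ENNReal.ofReal (2 * π)) := by
          apply lintegral_add_right
          exact (ENNReal.measurable_ofReal.comp
            ((measurable_id.pow_const 2).mul hβm)).mul_const _
      _ = (∫⁻ θ in Sθ, ∫⁻ φ in Sφ, H q θ φ)
          + (∫⁻ θ in Sθ, ENNReal.ofReal (θ ^ 2 * βε θ)) *
              (ENNReal.ofReal (2 * f q.1 * f q.2 * n q) * ENNReal.ofReal (2 * π)) := by
          rw [lintegral_mul_const' _ _
            (ENNReal.mul_ne_top ENNReal.ofReal_ne_top ENNReal.ofReal_ne_top)]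
      _ = ENNReal.ofReal (2 * f q.1 * f q.2 * n q)
            * (ENNReal.ofReal (2 * π) * ENNReal.ofReal Bint)
          + (∫⁻ θ in Sθ, ∫⁻ φ in Sφ, H q θ φ) := by
          rw [hLβ]; ring
      _ = (∫⁻ θ in Sθ, ∫⁻ φ in Sφ, H q θ φ)
          + ENNReal.ofReal (2 * f q.1 * f q.2 * n q)
              * (ENNReal.ofReal (2 * π) * ENNReal.ofReal Bint) := add_comm _ _
  -- integrability of the moment function on the product space
  have hgint : Integrable (fun q : E3 × E3 => 2 * f q.1 * f q.2 * n q) := by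
    have h1 : Integrable (fun q : E3 × E3 => (‖q.1‖ ^ 2 * f q.1) * f q.2) := by
      rw [MeasureTheory.Measure.volume_eq_prod]
      exact hmom.mul_prod hfi
    have h2 : Integrable (fun q : E3 × E3 => f q.1 * (‖q.2‖ ^ 2 * f q.2)) := by
      rw [MeasureTheory.Measure.volume_eq_prod]
      exact hfi.mul_prod hmom
    have heq : (fun q : E3 × E3 => 2 * f q.1 * f q.2 * n q)
        = fun q => 2 * ((‖q.1‖ ^ 2 * f q.1) * f q.2) + 2 * (f q.1 * (‖q.2‖ ^ 2 * f q.2)) := by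
      funext q; rw [hndef]; ring
    rw [heq]
    exact (h1.const_mul 2).add (h2.const_mul 2)
  have hMnn : 0 ≤ M := by
    rw [hMdef]
    exact integral_nonneg fun q => mul_nonneg (by positivity)
      (mul_nonneg (hf0 q.1) (hf0 q.2))
  have hBnn : 0 ≤ Bint := by
    rw [hBdef]
    exact setIntegral_nonneg measurableSet_Ioc fun θ hθ =>
      mul_nonneg (sq_nonneg θ) (hβ0 θ hθ)
  have hgq : (∫⁻ q : E3 × E3, ENNReal.ofReal (2 * f q.1 * f q.2 * n q))
      = ENNReal.ofReal (2 * M) := by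
    rw [← ofReal_integral_eq_lintegral_ofReal hgint (ae_of_all _ hg0)]
    congr 1
    rw [hMdef, show (fun q : E3 × E3 => 2 * f q.1 * f q.2 * n q)
      = fun q : E3 × E3 => 2 * ((‖q.1‖ ^ 2 + ‖q.2‖ ^ 2) * (f q.1 * f q.2)) by
        funext q; rw [hndef]; ring]
    exact integral_const_mul 2 _
  have herr : (∫⁻ q : E3 × E3, ENNReal.ofReal (2 * f q.1 * f q.2 * n q))
      * (ENNReal.ofReal (2 * π) * ENNReal.ofReal Bint)
      ≤ ENNReal.ofReal (150 * π * M * Bint) := by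
    rw [hgq, ← ENNReal.ofReal_mul (by positivity),
      ← ENNReal.ofReal_mul (mul_nonneg (by linarith) (by positivity))]
    apply ENNReal.ofReal_le_ofReal
    nlinarith [Real.pi_pos, mul_nonneg hMnn hBnn]
  calc ENNReal.ofReal c * ∫⁻ q : E3 × E3, ∫⁻ θ in Sθ, ∫⁻ φ in Sφ, G q θ φ
      = ∫⁻ q : E3 × E3, ENNReal.ofReal c * ∫⁻ θ in Sθ, ∫⁻ φ in Sφ, G q θ φ :=
        (lintegral_const_mul' _ _ ENNReal.ofReal_ne_top).symm
    _ ≤ ∫⁻ q : E3 × E3, ((∫⁻ θ in Sθ, ∫⁻ φ in Sφ, H q θ φ)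
          + ENNReal.ofReal (2 * f q.1 * f q.2 * n q)
              * (ENNReal.ofReal (2 * π) * ENNReal.ofReal Bint)) :=
        lintegral_mono hperq
    _ = (∫⁻ q : E3 × E3, ∫⁻ θ in Sθ, ∫⁻ φ in Sφ, H q θ φ)
        + ∫⁻ q : E3 × E3, ENNReal.ofReal (2 * f q.1 * f q.2 * n q)
            * (ENNReal.ofReal (2 * π) * ENNReal.ofReal Bint) := by
        apply lintegral_add_right
        apply Measurable.mul_const
        apply ENNReal.measurable_ofReal.comp
        exact ((measurable_const.mul (hfm.comp measurable_fst)).mul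
          (hfm.comp measurable_snd)).mul
          (((measurable_fst.norm).pow_const 2).add ((measurable_snd.norm).pow_const 2))
    _ = (∫⁻ q : E3 × E3, ∫⁻ θ in Sθ, ∫⁻ φ in Sφ, H q θ φ)
        + (∫⁻ q : E3 × E3, ENNReal.ofReal (2 * f q.1 * f q.2 * n q))
            * (ENNReal.ofReal (2 * π) * ENNReal.ofReal Bint) := by
        rw [lintegral_mul_const' _ _
          (ENNReal.mul_ne_top ENNReal.ofReal_ne_top ENNReal.ofReal_ne_top)]
    _ ≤ (∫⁻ q : E3 × E3, ∫⁻ θ in Sθ, ∫⁻ φ in Sφ, H q θ φ)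
        + ENNReal.ofReal (150 * π * M * Bint) := add_le_add le_rfl herr
end Aux
end
end
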